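/- arXiv:1310.0933 — 6 statements merged into one kernel-verified Lean document; each statement's English description precedes it below -/
import Mathlib

section
/- In a Garside system of spindle type, for every pair of simple elements a, b ∈ S = Div(Δ), the right lcm a∨b and the left lcm a∨̃b lie in {a, b, Δ}. -/
/-- a left-divides b. -/
def LeftDvd {M : Type*} [Monoid M] (a b : M) : Prop := ∃ c : M, b = a * c

/-- a right-divides b. -/
def GRightDvd {M : Type*} [Monoid M] (a b : M) : Prop := ∃ c : M, b = c * a

/-- m is a right lcm of a and b. -/
def IsRightLcm {M : Type*} [Monoid M] (a b m : M) : Prop :=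
  LeftDvd a m ∧ LeftDvd b m ∧ ∀ x : M, LeftDvd a x → LeftDvd b x → LeftDvd m x

/-- m is a left lcm of a and b. -/
def IsLeftLcm {M : Type*} [Monoid M] (a b m : M) : Prop :=
  GRightDvd a m ∧ GRightDvd b m ∧ ∀ x : M, GRightDvd a x → GRightDvd b x → GRightDvd m x

/-- g is a left gcd of a and b. -/
def IsLeftGcd {M : Type*} [Monoid M] (a b g : M) : Prop :=
  LeftDvd g a ∧ LeftDvd g b ∧ ∀ x : M, LeftDvd x a → LeftDvd x b → LeftDvd x g

/-- g is a right gcd of a and b. -/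
def IsRightGcd {M : Type*} [Monoid M] (a b g : M) : Prop :=
  GRightDvd g a ∧ GRightDvd g b ∧ ∀ x : M, GRightDvd x a → GRightDvd x b → GRightDvd x g

/-- A monoid is Noetherian (atomic): the lengths of factorizations of any
    element into non-identity factors are bounded. -/
def NoetherianMonoid (M : Type*) [Monoid M] : Prop :=
  ∀ a : M, ∃ n : ℕ, ∀ l : List M, (∀ x ∈ l, x ≠ 1) → l.prod = a → l.length ≤ n

/-- A Garside monoid structure: a Noetherian cancellative monoid with right and
    left lcms, together with a balanced Garside element Δ whose (finite) set of
    divisors generates the monoid. -/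
structure GarsideMonoid (M : Type*) [Monoid M] where
  Δ : M
  noeth : NoetherianMonoid M
  cancel : ∀ a b b' c : M, a * b * c = a * b' * c → b = b'
  rlcm : ∀ a b : M, ∃ m : M, IsRightLcm a b m
  llcm : ∀ a b : M, ∃ m : M, IsLeftLcm a b m
  balanced : ∀ x : M, LeftDvd x Δ ↔ GRightDvd x Δ
  finS : {x : M | LeftDvd x Δ}.Finite
  genS : Submonoid.closure {x : M | LeftDvd x Δ} = ⊤

/-- The set of simple elements: divisors of the Garside element Δ. -/
def GarsideMonoid.S {M : Type*} [Monoid M] (gs : GarsideMonoid M) : Set M :=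
  {x : M | LeftDvd x gs.Δ}

/-- A Garside system is of spindle type if the left and right gcds of any
    two simple elements a, b lie in {a, b, 1}. -/
def GarsideMonoid.SpindleType {M : Type*} [Monoid M] (gs : GarsideMonoid M) : Prop :=
  (∀ a ∈ gs.S, ∀ b ∈ gs.S, ∀ g : M, IsLeftGcd a b g → g = a ∨ g = b ∨ g = 1) ∧
  (∀ a ∈ gs.S, ∀ b ∈ gs.S, ∀ g : M, IsRightGcd a b g → g = a ∨ g = b ∨ g = 1)

/-- x is an atom: non-identity and admitting no nontrivial factorization. -/
def IsAtomOf (M : Type*) [Monoid M] (x : M) : Prop :=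
  x ≠ 1 ∧ ∀ y z : M, x = y * z → y = 1 ∨ z = 1

/-- In a Garside system of spindle type, for every pair of simple elements
    a, b the right lcm a∨b and the left lcm lie in {a, b, Δ}. -/
theorem stmt_4 {M : Type*} [Monoid M] (gs : GarsideMonoid M)
    (hsp : gs.SpindleType) :
    ∀ a ∈ gs.S, ∀ b ∈ gs.S,
      (∀ m : M, IsRightLcm a b m → m = a ∨ m = b ∨ m = gs.Δ) ∧
      (∀ m : M, IsLeftLcm a b m → m = a ∨ m = b ∨ m = gs.Δ) := by
  obtain ⟨hL, hR⟩ := hsp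
  have lcancel : ∀ x y y' : M, x * y = x * y' → y = y' := by
    intro x y y' h
    exact gs.cancel x y y' 1 (by simpa using h)
  have rcancel : ∀ x y y' : M, y * x = y' * x → y = y' := by
    intro x y y' h
    exact gs.cancel 1 y y' x (by simpa using h)
  intro a ha b hb
  constructor
  · intro m hm
    obtain ⟨⟨c, hc⟩, ⟨d, hd⟩, hmin⟩ := hm
    obtain ⟨g, hg⟩ := hmin gs.Δ ha hb
    -- Δ = m * g, m = a * c = b * d
    have hSa : (c * g) ∈ gs.S := by
      refine (gs.balanced _).mpr ⟨a, ?_⟩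
      rw [hg, hc, mul_assoc]
    have hSb : (d * g) ∈ gs.S := by
      refine (gs.balanced _).mpr ⟨b, ?_⟩
      rw [hg, hd, mul_assoc]
    have hgcd : IsRightGcd (c * g) (d * g) g := by
      refine ⟨⟨c, rfl⟩, ⟨d, rfl⟩, ?_⟩
      intro x ⟨p, hp⟩ ⟨q, hq⟩
      -- c*g = p*x, d*g = q*x
      have h1 : gs.Δ = a * p * x := by rw [hg, hc, mul_assoc, hp, ← mul_assoc]
      have h2 : gs.Δ = b * q * x := by rw [hg, hd, mul_assoc, hq, ← mul_assoc]
      have hy : a * p = b * q := rcancel x _ _ (h1 ▸ h2)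
      obtain ⟨e, he⟩ := hmin (a * p) ⟨p, rfl⟩ ⟨q, hy⟩
      have : m * g = m * (e * x) := by
        rw [← hg, h1, he, mul_assoc]
      exact ⟨e, lcancel m _ _ this⟩
    rcases hR _ hSa _ hSb g hgcd with h | h | h
    · left
      apply rcancel g
      rw [← hg]
      calc gs.Δ = a * (c * g) := by rw [hg, hc, mul_assoc]
        _ = a * g := by rw [← h]
    · right; left
      apply rcancel g
      rw [← hg]
      calc gs.Δ = b * (d * g) := by rw [hg, hd, mul_assoc]
        _ = b * g := by rw [← h]
    · right; right
      rw [hg, h, mul_one]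
  · intro m hm
    obtain ⟨⟨c, hc⟩, ⟨d, hd⟩, hmin⟩ := hm
    obtain ⟨g, hg⟩ := hmin gs.Δ ((gs.balanced a).mp ha) ((gs.balanced b).mp hb)
    -- Δ = g * m, m = c * a = d * b
    have hSa : (g * c) ∈ gs.S := ⟨a, by rw [hg, hc, ← mul_assoc]⟩
    have hSb : (g * d) ∈ gs.S := ⟨b, by rw [hg, hd, ← mul_assoc]⟩
    have hgcd : IsLeftGcd (g * c) (g * d) g := by
      refine ⟨⟨c, rfl⟩, ⟨d, rfl⟩, ?_⟩
      intro x ⟨p, hp⟩ ⟨q, hq⟩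
      have h1 : gs.Δ = x * (p * a) := by
        rw [hg, hc, ← mul_assoc, hp, mul_assoc]
      have h2 : gs.Δ = x * (q * b) := by
        rw [hg, hd, ← mul_assoc, hq, mul_assoc]
      have hy : p * a = q * b := lcancel x _ _ (h1 ▸ h2)
      obtain ⟨e, he⟩ := hmin (p * a) ⟨p, rfl⟩ ⟨q, hy⟩
      have : g * m = (x * e) * m := by
        rw [← hg, h1, he, ← mul_assoc]
      exact ⟨e, rcancel m _ _ this⟩
    rcases hL _ hSa _ hSb g hgcd with h | h | h
    · left
      apply lcancel g
      rw [← hg]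
      calc gs.Δ = (g * c) * a := by rw [hg, hc, ← mul_assoc]
        _ = g * a := by rw [← h]
    · right; left
      apply lcancel g
      rw [← hg]
      calc gs.Δ = (g * d) * b := by rw [hg, hd, ← mul_assoc]
        _ = g * b := by rw [← h]
    · right; right
      rw [hg, h, one_mul]
end

section
/- A Garside group of spindle type with atom set {a₁,…,aₙ} admits the presentation ⟨a₁,…,aₙ | a₁·∂(a₁) = a₂·∂(a₂) = … = aₙ·∂(aₙ)⟩, where ∂(aᵢ) denotes (a word representing) the right complement aᵢ\Δ. -/
/-- a left-divides b within the submonoid P of positive elements. -/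
def LeftDvdIn {G : Type*} [Group G] (P : Submonoid G) (a b : G) : Prop :=
  ∃ c ∈ P, b = a * c

/-- a right-divides b within the submonoid P of positive elements. -/
def RightDvdIn {G : Type*} [Group G] (P : Submonoid G) (a b : G) : Prop :=
  ∃ c ∈ P, b = c * a

/-- m is a right lcm of a and b relative to P. -/
def IsRightLcmIn {G : Type*} [Group G] (P : Submonoid G) (a b m : G) : Prop :=
  LeftDvdIn P a m ∧ LeftDvdIn P b m ∧
    ∀ x : G, LeftDvdIn P a x → LeftDvdIn P b x → LeftDvdIn P m x

/-- m is a left lcm of a and b relative to P. -/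
def IsLeftLcmIn {G : Type*} [Group G] (P : Submonoid G) (a b m : G) : Prop :=
  RightDvdIn P a m ∧ RightDvdIn P b m ∧
    ∀ x : G, RightDvdIn P a x → RightDvdIn P b x → RightDvdIn P m x

/-- g is a left gcd of a and b relative to P. -/
def IsLeftGcdIn {G : Type*} [Group G] (P : Submonoid G) (a b g : G) : Prop :=
  LeftDvdIn P g a ∧ LeftDvdIn P g b ∧
    ∀ x : G, LeftDvdIn P x a → LeftDvdIn P x b → LeftDvdIn P x g

/-- g is a right gcd of a and b relative to P. -/
def IsRightGcdIn {G : Type*} [Group G] (P : Submonoid G) (a b g : G) : Prop :=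
  RightDvdIn P g a ∧ RightDvdIn P g b ∧
    ∀ x : G, RightDvdIn P x a → RightDvdIn P x b → RightDvdIn P x g

/-- A Garside group structure: a group G with a submonoid P of positive
    elements which is Noetherian, admits right and left lcms, has a balanced
    Garside element Δ with finitely many divisors, and such that G is the
    group of (left) fractions of P. -/
structure GarsideGroup (G : Type*) [Group G] where
  P : Submonoid G
  Δ : G
  Δpos : Δ ∈ P
  noeth : ∀ a ∈ P, ∃ n : ℕ, ∀ l : List G,
    (∀ x ∈ l, x ∈ P ∧ x ≠ 1) → l.prod = a → l.length ≤ n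
  rlcm : ∀ a ∈ P, ∀ b ∈ P, ∃ m ∈ P, IsRightLcmIn P a b m
  llcm : ∀ a ∈ P, ∀ b ∈ P, ∃ m ∈ P, IsLeftLcmIn P a b m
  balanced : ∀ x ∈ P, (LeftDvdIn P x Δ ↔ RightDvdIn P x Δ)
  finS : {x : G | x ∈ P ∧ LeftDvdIn P x Δ}.Finite
  fractions : ∀ g : G, ∃ x ∈ P, ∃ y ∈ P, g = x⁻¹ * y

/-- The set of simple elements: positive divisors of Δ. -/
def GarsideGroup.S {G : Type*} [Group G] (gs : GarsideGroup G) : Set G :=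
  {x : G | x ∈ gs.P ∧ LeftDvdIn gs.P x gs.Δ}

/-- Spindle type: left and right gcds of simple elements a, b lie in {a,b,1}. -/
def GarsideGroup.SpindleType {G : Type*} [Group G] (gs : GarsideGroup G) : Prop :=
  (∀ a ∈ gs.S, ∀ b ∈ gs.S, ∀ g : G, IsLeftGcdIn gs.P a b g → g = a ∨ g = b ∨ g = 1) ∧
  (∀ a ∈ gs.S, ∀ b ∈ gs.S, ∀ g : G, IsRightGcdIn gs.P a b g → g = a ∨ g = b ∨ g = 1)

/-- The inner automorphism τ(x) = Δ⁻¹xΔ. -/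
def GarsideGroup.τ {G : Type*} [Group G] (gs : GarsideGroup G) (x : G) : G :=
  gs.Δ⁻¹ * x * gs.Δ

/-- (p, s) is the left normal form data of b: b = Δ^p·s₁⋯sₗ, each sᵢ a proper
    simple element with sᵢ = Δ ∧ (sᵢ⋯sₗ) (the left-greedy condition). -/
def IsLNF {G : Type*} [Group G] (gs : GarsideGroup G) (b : G) (p : ℤ)
    (s : List G) : Prop :=
  b = gs.Δ ^ p * s.prod ∧
  (∀ x ∈ s, x ∈ gs.S ∧ x ≠ 1 ∧ x ≠ gs.Δ) ∧
  ∀ i : ℕ, ∀ h : i < s.length,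
    IsLeftGcdIn gs.P gs.Δ ((s.drop i).prod) (s.get ⟨i, h⟩)

/-- Rigidity of an element with left normal form Δ^p·s₁⋯sₗ:
    τ^{-p}(s₁) ∧ ∂(sₗ) = 1, where τ^{-p}(s₁) = Δ^p s₁ Δ^{-p} and
    ∂(sₗ) = sₗ⁻¹Δ. -/
def IsRigid {G : Type*} [Group G] (gs : GarsideGroup G) (p : ℤ)
    (s : List G) : Prop :=
  s ≠ [] ∧ IsLeftGcdIn gs.P (gs.Δ ^ p * (s.head?.getD 1) * gs.Δ ^ (-p))
    ((s.getLast?.getD 1)⁻¹ * gs.Δ) 1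

/-- x is an atom of the positive monoid P. -/
def IsAtomIn {G : Type*} [Group G] (P : Submonoid G) (x : G) : Prop :=
  x ∈ P ∧ x ≠ 1 ∧ ∀ y ∈ P, ∀ z ∈ P, x = y * z → y = 1 ∨ z = 1

section Aux

variable {G : Type*} [Group G] (gs : GarsideGroup G)

/-- the set of bounds on lengths of positive factorizations of p. -/
def gbounds (p : G) : Set ℕ :=
  {n | ∀ l : List G, (∀ x ∈ l, x ∈ gs.P ∧ x ≠ 1) → l.prod = p → l.length ≤ n}

noncomputable def gnorm (p : G) : ℕ := sInf (gbounds gs p)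

lemma gnorm_spec {p : G} (hp : p ∈ gs.P) : gnorm gs p ∈ gbounds gs p :=
  Nat.sInf_mem (gs.noeth p hp)

lemma prod_eq_one_nil {l : List G} (hl : ∀ x ∈ l, x ∈ gs.P ∧ x ≠ 1)
    (h : l.prod = 1) : l = [] := by
  by_contra hne
  obtain ⟨N, hN⟩ := gs.noeth 1 (one_mem _)
  set L := (List.replicate (N + 1) l).flatten with hL
  have hmem : ∀ x ∈ L, x ∈ gs.P ∧ x ≠ 1 := by
    intro x hx
    rw [hL, List.mem_flatten] at hx
    obtain ⟨l', hl', hx⟩ := hx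
    rw [List.mem_replicate] at hl'
    exact hl x (hl'.2 ▸ hx)
  have hprod : L.prod = 1 := by
    rw [hL, List.prod_flatten]
    simp [List.map_replicate, h]
  have hlen := hN L hmem hprod
  rw [hL, List.length_flatten] at hlen
  simp [List.map_replicate] at hlen
  have : 1 ≤ l.length := List.length_pos_iff.mpr hne
  nlinarith

lemma gnorm_pos {p : G} (hp : p ∈ gs.P) (hp1 : p ≠ 1) : 1 ≤ gnorm gs p := by
  have := gnorm_spec gs hp [p] (by simp [hp, hp1]) (by simp)
  simpa using this

lemma gnorm_lt {p q x : G} (hp : p ∈ gs.P) (hq : q ∈ gs.P) (hx : x ∈ gs.P)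
    (hx1 : x ≠ 1) (he : p = x * q) : gnorm gs q < gnorm gs p := by
  have hp1 : p ≠ 1 := by
    intro h
    by_cases hq1 : q = 1
    · exact hx1 (by simpa [hq1] using he.symm.trans h)
    · have := prod_eq_one_nil gs (l := [x, q]) (by simp [hx, hx1, hq, hq1])
        (by simp [← he, h])
      simp at this
  have h1 : gnorm gs q ≤ gnorm gs p - 1 := by
    apply Nat.sInf_le
    intro l hl hlp
    have := gnorm_spec gs hp (x :: l) (by
      intro y hy
      rcases List.mem_cons.mp hy with h | h
      · exact ⟨h ▸ hx, h ▸ hx1⟩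
      · exact hl y h) (by simp [hlp, he])
    simp at this
    omega
  have h2 := gnorm_pos gs hp hp1
  omega

lemma gnorm_lt' {p q x : G} (hp : p ∈ gs.P) (hq : q ∈ gs.P) (hx : x ∈ gs.P)
    (hx1 : x ≠ 1) (he : p = q * x) : gnorm gs q < gnorm gs p := by
  have hp1 : p ≠ 1 := by
    intro h
    by_cases hq1 : q = 1
    · exact hx1 (by simpa [hq1] using he.symm.trans h)
    · have := prod_eq_one_nil gs (l := [q, x]) (by simp [hx, hx1, hq, hq1])
        (by simp [← he, h])
      simp at this
  have h1 : gnorm gs q ≤ gnorm gs p - 1 := by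
    apply Nat.sInf_le
    intro l hl hlp
    have := gnorm_spec gs hp (l ++ [x]) (by
      intro y hy
      rcases List.mem_append.mp hy with h | h
      · exact hl y h
      · simp at h; exact ⟨h ▸ hx, h ▸ hx1⟩) (by simp [hlp, ← he])
    simp at this
    omega
  have h2 := gnorm_pos gs hp hp1
  omega

lemma wprod_mem {n : ℕ} {a : Fin n → G} (haP : ∀ i, a i ∈ gs.P)
    (w : List (Fin n)) : ((w.map a).prod) ∈ gs.P := by
  apply Submonoid.list_prod_mem
  intro x hx
  obtain ⟨i, _, rfl⟩ := List.mem_map.mp hx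
  exact haP i

lemma atoms_gen {n : ℕ} {a : Fin n → G} (hatom : ∀ i, IsAtomIn gs.P (a i))
    (hall : ∀ x : G, IsAtomIn gs.P x → ∃ i, x = a i) :
    ∀ p ∈ gs.P, ∃ w : List (Fin n), ((w.map a).prod) = p := by
  intro p hp
  generalize hN : gnorm gs p = N
  induction N using Nat.strong_induction_on generalizing p with
  | _ N IH =>
  by_cases hp1 : p = 1
  · exact ⟨[], by simp [hp1]⟩
  by_cases hat : IsAtomIn gs.P p
  · obtain ⟨i, rfl⟩ := hall p hat
    exact ⟨[i], by simp⟩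
  · rw [IsAtomIn] at hat
    push_neg at hat
    obtain ⟨y, hy, z, hz, hyz, hy1, hz1⟩ := hat hp hp1
    obtain ⟨wy, hwy⟩ := IH (gnorm gs y) (hN ▸ gnorm_lt' gs hp hy hz hz1 hyz) y hy rfl
    obtain ⟨wz, hwz⟩ := IH (gnorm gs z) (hN ▸ gnorm_lt gs hp hz hy hy1 hyz) z hz rfl
    exact ⟨wy ++ wz, by simp [hwy, hwz, hyz]⟩

lemma delta_of_two_atoms {n : ℕ} {a : Fin n → G} (hsp : gs.SpindleType)
    (hatom : ∀ i, IsAtomIn gs.P (a i)) {Dw : Fin n → List (Fin n)}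
    (hDw : ∀ i, ((Dw i).map a).prod = (a i)⁻¹ * gs.Δ)
    {i j : Fin n} (hij : a i ≠ a j) {p : G}
    (hi : LeftDvdIn gs.P (a i) p) (hj : LeftDvdIn gs.P (a j) p) :
    ∃ r ∈ gs.P, p = gs.Δ * r := by
  have haP : ∀ k, a k ∈ gs.P := fun k => (hatom k).1
  set di := ((Dw i).map a).prod with hdidef
  set dj := ((Dw j).map a).prod with hdjdef
  have hdiP : di ∈ gs.P := wprod_mem gs haP _
  have hdjP : dj ∈ gs.P := wprod_mem gs haP _
  have hΔi : gs.Δ = a i * di := by rw [hdidef, hDw i]; group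
  have hΔj : gs.Δ = a j * dj := by rw [hdjdef, hDw j]; group
  obtain ⟨m, hmP, hmi, hmj, hmin⟩ := gs.rlcm (a i) (haP i) (a j) (haP j)
  obtain ⟨c, hc, hΔc⟩ := hmin gs.Δ ⟨di, hdiP, hΔi⟩ ⟨dj, hdjP, hΔj⟩
  obtain ⟨x, hx, hmx⟩ := hmi
  obtain ⟨y, hy, hmy⟩ := hmj
  have hdx : di = x * c := by
    have : a i * di = a i * (x * c) := by
      rw [← hΔi, hΔc, hmx]; group
    exact mul_left_cancel this
  have hdy : dj = y * c := by
    have : a j * dj = a j * (y * c) := by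
      rw [← hΔj, hΔc, hmy]; group
    exact mul_left_cancel this
  have hgcd : IsRightGcdIn gs.P di dj c := by
    refine ⟨⟨x, hx, hdx⟩, ⟨y, hy, hdy⟩, ?_⟩
    rintro z ⟨u, hu, hdu⟩ ⟨v, hv, hdv⟩
    have he : a i * u = a j * v := by
      have h1 : a i * u * z = a j * v * z := by
        rw [mul_assoc, ← hdu, mul_assoc, ← hdv, ← hΔi, ← hΔj]
      exact mul_right_cancel h1
    obtain ⟨w, hw, hmw⟩ := hmin (a i * u) ⟨u, hu, rfl⟩ ⟨v, hv, he⟩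
    refine ⟨w, hw, mul_left_cancel (a := m) ?_⟩
    have : m * (w * z) = a i * u * z := by rw [← mul_assoc, ← hmw]
    rw [this, mul_assoc, ← hdu, ← hΔi, hΔc]
  have hdiS : di ∈ gs.S :=
    ⟨hdiP, (gs.balanced di hdiP).mpr ⟨a i, haP i, hΔi⟩⟩
  have hdjS : dj ∈ gs.S :=
    ⟨hdjP, (gs.balanced dj hdjP).mpr ⟨a j, haP j, hΔj⟩⟩
  rcases hsp.2 di hdiS dj hdjS c hgcd with h | h | h
  · -- c = di : impossible
    exfalso
    rw [h] at hdx
    have hx1 : x = 1 := by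
      have : x * di = 1 * di := by rw [← hdx, one_mul]
      exact mul_right_cancel this
    rw [hx1, mul_one] at hmx
    rw [hmx] at hmy
    rcases (hatom i).2.2 (a j) (haP j) y hy hmy with h' | h'
    · exact (hatom j).2.1 h'
    · exact hij (by rw [hmy, h', mul_one])
  · -- c = dj : impossible
    exfalso
    rw [h] at hdy
    have hy1 : y = 1 := by
      have : y * dj = 1 * dj := by rw [← hdy, one_mul]
      exact mul_right_cancel this
    rw [hy1, mul_one] at hmy
    rw [hmy] at hmx
    rcases (hatom j).2.2 (a i) (haP i) x hx hmx with h' | h'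
    · exact (hatom i).2.1 h'
    · refine hij ?_
      have : a j = a i := by rw [hmx, h', mul_one]
      exact this.symm
  · -- c = 1 : m = Δ
    rw [h, mul_one] at hΔc
    obtain ⟨r, hr, hpr⟩ := hmin p hi hj
    exact ⟨r, hr, by rw [hpr, ← hΔc]⟩

lemma key_words {n : ℕ} {a : Fin n → G} (hsp : gs.SpindleType)
    (ha : Function.Injective a) (hatom : ∀ i, IsAtomIn gs.P (a i))
    (hall : ∀ x : G, IsAtomIn gs.P x → ∃ i, x = a i)
    {Dw : Fin n → List (Fin n)}
    (hDw : ∀ i, ((Dw i).map a).prod = (a i)⁻¹ * gs.Δ)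
    {rels : Set (FreeGroup (Fin n))}
    (hrel : ∀ i j : Fin n,
      (FreeGroup.of i * ((Dw i).map FreeGroup.of).prod) *
        (FreeGroup.of j * ((Dw j).map FreeGroup.of).prod)⁻¹ ∈
        Subgroup.normalClosure rels) :
    ∀ u v : List (Fin n), (u.map a).prod = (v.map a).prod →
      PresentedGroup.mk rels ((u.map FreeGroup.of).prod) =
        PresentedGroup.mk rels ((v.map FreeGroup.of).prod) := by
  have haP : ∀ k, a k ∈ gs.P := fun k => (hatom k).1
  have ha1 : ∀ k, a k ≠ 1 := fun k => (hatom k).2.1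
  have hwP : ∀ w : List (Fin n), ∀ x ∈ w.map a, x ∈ gs.P ∧ x ≠ 1 := by
    intro w x hx
    obtain ⟨k, _, rfl⟩ := List.mem_map.mp hx
    exact ⟨haP k, ha1 k⟩
  have hrel' : ∀ i j : Fin n,
      PresentedGroup.mk rels (FreeGroup.of i * ((Dw i).map FreeGroup.of).prod) =
      PresentedGroup.mk rels (FreeGroup.of j * ((Dw j).map FreeGroup.of).prod) := by
    intro i j
    rw [← mul_inv_eq_one, ← map_inv, ← map_mul]
    exact (QuotientGroup.eq_one_iff _).mpr (hrel i j)
  intro u v huv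
  generalize hN : gnorm gs ((u.map a).prod) = N
  induction N using Nat.strong_induction_on generalizing u v with
  | _ N IH =>
  match u, v with
  | [], v =>
    have hv : v.map a = [] := by
      apply prod_eq_one_nil gs (hwP v)
      rw [← huv]; simp
    rw [List.map_eq_nil_iff] at hv
    rw [hv]
  | u, [] =>
    have hu : u.map a = [] := by
      apply prod_eq_one_nil gs (hwP u)
      rw [huv]; simp
    rw [List.map_eq_nil_iff] at hu
    rw [hu]
  | i :: u', j :: v' =>
    have hU'P : (u'.map a).prod ∈ gs.P := wprod_mem gs haP u'
    have hV'P : (v'.map a).prod ∈ gs.P := wprod_mem gs haP v'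
    have hpu : ((i :: u').map a).prod = a i * (u'.map a).prod := by simp
    have hpv : ((j :: v').map a).prod = a j * (v'.map a).prod := by simp
    have hPp : ((i :: u').map a).prod ∈ gs.P := wprod_mem gs haP _
    by_cases hij : i = j
    · subst hij
      have hUV : (u'.map a).prod = (v'.map a).prod := by
        apply mul_left_cancel (a := a i)
        rw [← hpu, ← hpv, huv]
      have hlt : gnorm gs ((u'.map a).prod) < N := by
        rw [← hN]
        exact gnorm_lt gs (hpu ▸ hPp) hU'P (haP i) (ha1 i) hpu
      have := IH _ hlt u' v' hUV rfl
      simp only [List.map_cons, List.prod_cons, map_mul, this]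
    · have hia : a i ≠ a j := fun h => hij (ha h)
      obtain ⟨r, hr, hpr⟩ := delta_of_two_atoms gs hsp hatom hDw hia
        ⟨(u'.map a).prod, hU'P, hpu⟩
        ⟨(v'.map a).prod, hV'P, by rw [huv]; exact hpv⟩
      obtain ⟨wr, hwr⟩ := atoms_gen gs hatom hall r hr
      have h1 : (((Dw i) ++ wr).map a).prod = (u'.map a).prod := by
        apply mul_left_cancel (a := a i)
        rw [List.map_append, List.prod_append, hDw i, hwr, ← hpu, hpr]
        group
      have h2 : (((Dw j) ++ wr).map a).prod = (v'.map a).prod := by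
        apply mul_left_cancel (a := a j)
        rw [List.map_append, List.prod_append, hDw j, hwr, ← hpv, ← huv, hpr]
        group
      have hlt1 : gnorm gs ((u'.map a).prod) < N := by
        rw [← hN]
        exact gnorm_lt gs (hpu ▸ hPp) hU'P (haP i) (ha1 i) hpu
      have hlt2 : gnorm gs ((v'.map a).prod) < N := by
        rw [← hN]
        refine gnorm_lt gs (hpu ▸ hPp) hV'P (haP j) (ha1 j) ?_
        rw [← hpv, huv]
      have e1 := IH _ hlt1 (Dw i ++ wr) u' h1 (by rw [h1])
      have e2 := IH _ hlt2 (Dw j ++ wr) v' h2 (by rw [h2])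
      have expand : ∀ k : Fin n, ∀ w' : List (Fin n),
          PresentedGroup.mk rels (((k :: (Dw k ++ w')).map FreeGroup.of).prod) =
          PresentedGroup.mk rels (FreeGroup.of k * ((Dw k).map FreeGroup.of).prod) *
            PresentedGroup.mk rels ((w'.map FreeGroup.of).prod) := by
        intro k w'
        simp [List.map_append, List.prod_append, map_mul, mul_assoc]
      calc PresentedGroup.mk rels (((i :: u').map FreeGroup.of).prod)
          = PresentedGroup.mk rels (((i :: (Dw i ++ wr)).map FreeGroup.of).prod) := by
            simp only [List.map_cons, List.prod_cons, map_mul, e1]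
        _ = PresentedGroup.mk rels (FreeGroup.of i * ((Dw i).map FreeGroup.of).prod) *
            PresentedGroup.mk rels ((wr.map FreeGroup.of).prod) := expand i wr
        _ = PresentedGroup.mk rels (FreeGroup.of j * ((Dw j).map FreeGroup.of).prod) *
            PresentedGroup.mk rels ((wr.map FreeGroup.of).prod) := by rw [hrel' i j]
        _ = PresentedGroup.mk rels (((j :: (Dw j ++ wr)).map FreeGroup.of).prod) :=
            (expand j wr).symm
        _ = PresentedGroup.mk rels (((j :: v').map FreeGroup.of).prod) := by
            simp only [List.map_cons, List.prod_cons, map_mul, e2]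

end Aux

/-- A Garside group of spindle type with atoms a₁,…,aₙ admits the presentation
    ⟨a₁,…,aₙ | a₁·∂(a₁) = ⋯ = aₙ·∂(aₙ)⟩ where ∂(aᵢ) = aᵢ⁻¹Δ is the right
    complement, represented by the word Dw i over the atoms. -/
theorem stmt_8 {G : Type*} [Group G] (gs : GarsideGroup G)
    (hsp : gs.SpindleType) (n : ℕ) (a : Fin n → G)
    (ha : Function.Injective a) (hatom : ∀ i, IsAtomIn gs.P (a i))
    (hall : ∀ x : G, IsAtomIn gs.P x → ∃ i, x = a i)
    (Dw : Fin n → List (Fin n))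
    (hDw : ∀ i, ((Dw i).map a).prod = (a i)⁻¹ * gs.Δ) :
    ∃ e : PresentedGroup {r : FreeGroup (Fin n) |
        ∃ i j : Fin n,
          r = (FreeGroup.of i * ((Dw i).map FreeGroup.of).prod) *
            (FreeGroup.of j * ((Dw j).map FreeGroup.of).prod)⁻¹} ≃* G,
      ∀ i : Fin n, e (PresentedGroup.of i) = a i := by
  classical
  set rels : Set (FreeGroup (Fin n)) := {r : FreeGroup (Fin n) |
        ∃ i j : Fin n,
          r = (FreeGroup.of i * ((Dw i).map FreeGroup.of).prod) *
            (FreeGroup.of j * ((Dw j).map FreeGroup.of).prod)⁻¹} with hrelsdef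
  have haP : ∀ k, a k ∈ gs.P := fun k => (hatom k).1
  have hrel : ∀ i j : Fin n,
      (FreeGroup.of i * ((Dw i).map FreeGroup.of).prod) *
        (FreeGroup.of j * ((Dw j).map FreeGroup.of).prod)⁻¹ ∈
        Subgroup.normalClosure rels :=
    fun i j => Subgroup.subset_normalClosure ⟨i, j, rfl⟩
  have key := key_words gs hsp ha hatom hall hDw hrel
  -- the lift of words
  have hlift : ∀ w : List (Fin n),
      (FreeGroup.lift a) ((w.map FreeGroup.of).prod) = (w.map a).prod := by
    intro w
    rw [map_list_prod, List.map_map]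
    simp [Function.comp_def]
  have hliftrel : ∀ r ∈ rels, FreeGroup.lift a r = 1 := by
    rintro r ⟨i, j, rfl⟩
    rw [map_mul, map_inv, map_mul, map_mul, hlift, hlift, hDw i, hDw j,
      FreeGroup.lift_apply_of, FreeGroup.lift_apply_of]
    group
  set φ : PresentedGroup rels →* G := PresentedGroup.toGroup hliftrel with hφdef
  have hφof : ∀ i, φ (PresentedGroup.of i) = a i :=
    fun i => PresentedGroup.toGroup.of hliftrel
  have hφmk : ∀ w : List (Fin n),
      φ (PresentedGroup.mk rels ((w.map FreeGroup.of).prod)) = (w.map a).prod := by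
    intro w
    induction w with
    | nil => simp
    | cons k t iht =>
      simp only [List.map_cons, List.prod_cons, map_mul, iht]
      congr 1
      exact hφof k
  -- the inverse on positives
  choose word hword using atoms_gen gs hatom hall
  set ψ : G → PresentedGroup rels := fun p =>
    if hp : p ∈ gs.P then
      PresentedGroup.mk rels (((word p hp).map FreeGroup.of).prod)
    else 1 with hψdef
  have ψeq : ∀ p (hp : p ∈ gs.P) (w : List (Fin n)), (w.map a).prod = p →
      ψ p = PresentedGroup.mk rels ((w.map FreeGroup.of).prod) := by
    intro p hp w hw
    rw [hψdef]
    simp only [dif_pos hp]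
    exact key _ _ (by rw [hword p hp, hw])
  have ψmul : ∀ p, p ∈ gs.P → ∀ q, q ∈ gs.P → ψ (p * q) = ψ p * ψ q := by
    intro p hp q hq
    rw [ψeq (p * q) (mul_mem hp hq) (word p hp ++ word q hq)
      (by rw [List.map_append, List.prod_append, hword p hp, hword q hq]),
      ψeq p hp (word p hp) (hword p hp), ψeq q hq (word q hq) (hword q hq)]
    rw [List.map_append, List.prod_append, map_mul]
  have ψ1 : ψ 1 = 1 := by
    rw [ψeq 1 (one_mem _) [] (by simp)]
    simp
  have ψatom : ∀ i, ψ (a i) = PresentedGroup.of i := by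
    intro i
    rw [ψeq (a i) (haP i) [i] (by simp)]
    simp [PresentedGroup.of]
  have φψ : ∀ p, p ∈ gs.P → φ (ψ p) = p := by
    intro p hp
    rw [ψeq p hp (word p hp) (hword p hp), hφmk, hword p hp]
  -- well-definedness on fractions
  have wd : ∀ x, x ∈ gs.P → ∀ y, y ∈ gs.P → ∀ u, u ∈ gs.P → ∀ v, v ∈ gs.P →
      x⁻¹ * y = u⁻¹ * v → (ψ x)⁻¹ * ψ y = (ψ u)⁻¹ * ψ v := by
    intro x hx y hy u hu v hv heq
    obtain ⟨m, hm, ⟨z, hz, hmz⟩, ⟨w, hw, hmw⟩, -⟩ := gs.llcm x hx u hu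
    have hx' : x = z⁻¹ * m := by rw [hmz]; group
    have hu' : u = w⁻¹ * m := by rw [hmw]; group
    have hzy : z * y = w * v := by
      have hy' : y = x * (u⁻¹ * v) := by rw [← heq]; group
      rw [hy', hx', hu']
      group
    have A : ψ m = ψ z * ψ x := by rw [hmz]; exact ψmul z hz x hx
    have B : ψ m = ψ w * ψ u := by rw [hmw]; exact ψmul w hw u hu
    have C : ψ (z * y) = ψ z * ψ y := ψmul z hz y hy
    have D : ψ (z * y) = ψ w * ψ v := by rw [hzy]; exact ψmul w hw v hv
    calc (ψ x)⁻¹ * ψ y = (ψ z * ψ x)⁻¹ * (ψ z * ψ y) := by group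
      _ = (ψ m)⁻¹ * ψ (z * y) := by rw [A, C]
      _ = (ψ w * ψ u)⁻¹ * (ψ w * ψ v) := by rw [B, D]
      _ = (ψ u)⁻¹ * ψ v := by group
  -- the inverse map
  set Ψ : G → PresentedGroup rels := fun g =>
    (ψ (gs.fractions g).choose)⁻¹ *
      ψ (gs.fractions g).choose_spec.2.choose with hΨdef
  have hrx : ∀ g : G, (gs.fractions g).choose ∈ gs.P :=
    fun g => (gs.fractions g).choose_spec.1
  have hry : ∀ g : G, (gs.fractions g).choose_spec.2.choose ∈ gs.P :=
    fun g => (gs.fractions g).choose_spec.2.choose_spec.1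
  have hrep : ∀ g : G, g = ((gs.fractions g).choose)⁻¹ *
      (gs.fractions g).choose_spec.2.choose :=
    fun g => (gs.fractions g).choose_spec.2.choose_spec.2
  have Ψeq : ∀ g : G, ∀ x, x ∈ gs.P → ∀ y, y ∈ gs.P → g = x⁻¹ * y →
      Ψ g = (ψ x)⁻¹ * ψ y := by
    intro g x hx y hy hg
    rw [hΨdef]
    exact wd _ (hrx g) _ (hry g) x hx y hy (by rw [← hrep g, hg])
  have Ψmul : ∀ g h : G, Ψ (g * h) = Ψ g * Ψ h := by
    intro g h
    obtain ⟨x, hx, y, hy, hg⟩ := gs.fractions g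
    obtain ⟨u, hu, v, hv, hh⟩ := gs.fractions h
    obtain ⟨m, hm, ⟨c, hc, hmc⟩, ⟨d, hd, hmd⟩, -⟩ := gs.llcm y hy u hu
    have hy' : y = c⁻¹ * m := by rw [hmc]; group
    have hu' : u = d⁻¹ * m := by rw [hmd]; group
    have hgh : g * h = (c * x)⁻¹ * (d * v) := by
      rw [hg, hh, hy', hu']
      group
    rw [Ψeq (g * h) (c * x) (mul_mem hc hx) (d * v) (mul_mem hd hv) hgh,
      Ψeq g x hx y hy hg, Ψeq h u hu v hv hh,
      ψmul c hc x hx, ψmul d hd v hv]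
    have hkey : ψ c * ψ y = ψ d * ψ u := by
      rw [← ψmul c hc y hy, ← ψmul d hd u hu, ← hmc, ← hmd]
    have h3 : ψ d = ψ c * ψ y * (ψ u)⁻¹ := by
      rw [hkey]
      group
    rw [h3]
    group
  have ΨHom : G →* PresentedGroup rels := MonoidHom.mk' Ψ Ψmul
  have hΨatom : ∀ i, Ψ (a i) = PresentedGroup.of i := by
    intro i
    rw [Ψeq (a i) 1 (one_mem _) (a i) (haP i) (by group), ψ1, ψatom]
    group
  have hretr : ∀ h : PresentedGroup rels, Ψ (φ h) = h := by
    have hext : (MonoidHom.mk' Ψ Ψmul).comp φ = MonoidHom.id _ := by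
      apply PresentedGroup.ext
      intro i
      simp only [MonoidHom.comp_apply, MonoidHom.id_apply, MonoidHom.mk'_apply]
      rw [hφof i, hΨatom i]
    intro h
    have := DFunLike.congr_fun hext h
    simpa using this
  have hsec : ∀ g : G, φ (Ψ g) = g := by
    intro g
    rw [hΨdef]
    simp only [map_mul, map_inv]
    rw [φψ _ (hrx g), φψ _ (hry g), ← hrep g]
  refine ⟨MulEquiv.mk ⟨⇑φ, Ψ, hretr, hsec⟩ φ.map_mul, ?_⟩
  intro i
  exact hφof i
end

section
/- In a homogeneous Garside system of spindle type, if simple elements c, c', d, e satisfy c·d = c'·e with c' = Δ ∧ (c·d) (left-greedy rewriting of the pair (c,d)), then max(|c'|, |e|) ≥ max(|c|, |d|), where |·| denotes the common length of all positive words representing an element. -/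
lemma atom_list_aux {M : Type*} [Monoid M] : ∀ (n : ℕ) (a : M),
    (∀ l : List M, (∀ x ∈ l, x ≠ 1) → l.prod = a → l.length ≤ n) →
    ∃ l : List M, (∀ x ∈ l, IsAtomOf M x) ∧ l.prod = a := by
  intro n
  induction n with
  | zero =>
    intro a h
    by_cases ha : a = 1
    · exact ⟨[], by simp, by simp [ha]⟩
    · have := h [a] (by simp [ha]) (by simp)
      simp at this
  | succ n ih =>
    intro a h
    by_cases ha : a = 1
    · exact ⟨[], by simp, by simp [ha]⟩
    by_cases hat : IsAtomOf M a
    · exact ⟨[a], by simp [hat], by simp⟩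
    · simp only [IsAtomOf, not_and] at hat
      have := hat ha
      push_neg at this
      obtain ⟨y, z, hyz, hy, hz⟩ := this
      have hby : ∀ l : List M, (∀ x ∈ l, x ≠ 1) → l.prod = y → l.length ≤ n := by
        intro l hl hp
        have hmem : ∀ x ∈ l ++ [z], x ≠ 1 := by
          intro x hx
          rcases List.mem_append.1 hx with h1 | h2
          · exact hl x h1
          · simp at h2; simpa [h2] using hz
        have := h (l ++ [z]) hmem (by simp [hp, ← hyz])
        simpa using this
      have hbz : ∀ l : List M, (∀ x ∈ l, x ≠ 1) → l.prod = z → l.length ≤ n := by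
        intro l hl hp
        have hmem : ∀ x ∈ y :: l, x ≠ 1 := by
          intro x hx
          rcases List.mem_cons.1 hx with h1 | h2
          · simpa [h1] using hy
          · exact hl x h2
        have := h (y :: l) hmem (by simp [hp, ← hyz])
        simpa using this
      obtain ⟨ly, hly, hpy⟩ := ih y hby
      obtain ⟨lz, hlz, hpz⟩ := ih z hbz
      refine ⟨ly ++ lz, ?_, by simp [hpy, hpz, hyz]⟩
      intro x hx
      rcases List.mem_append.1 hx with h1 | h2
      · exact hly x h1
      · exact hlz x h2

/-- In a homogeneous Garside system of spindle type (homogeneity is expressed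
    by a length function `len` assigning to each positive element the common
    length of all its representing words over the atoms): if simple elements
    c, d, c', e satisfy c·d = c'·e with c' = Δ ∧ (c·d) (left-greedy rewriting),
    then max(|c'|, |e|) ≥ max(|c|, |d|). -/
theorem stmt_9 {M : Type*} [Monoid M] (gs : GarsideMonoid M)
    (hsp : gs.SpindleType)
    (len : M → ℕ)
    (hlen : ∀ l : List M, (∀ x ∈ l, IsAtomOf M x) → len l.prod = l.length)
    (c d c' e : M) (hc : c ∈ gs.S) (hd : d ∈ gs.S) (hc' : c' ∈ gs.S)
    (he : e ∈ gs.S) (hcd : c * d = c' * e)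
    (hgreedy : IsLeftGcd gs.Δ (c * d) c') :
    max (len c) (len d) ≤ max (len c') (len e) := by
  classical
  have lcancel : ∀ a b b' : M, a * b = a * b' → b = b' := by
    intro a b b' h
    exact gs.cancel a b b' 1 (by simpa using h)
  have hatoms : ∀ a : M, ∃ l : List M, (∀ x ∈ l, IsAtomOf M x) ∧ l.prod = a := by
    intro a
    obtain ⟨n, hn⟩ := gs.noeth a
    exact atom_list_aux n a hn
  have hlen_mul : ∀ a b : M, len (a * b) = len a + len b := by
    intro a b
    obtain ⟨la, hla, hpa⟩ := hatoms a
    obtain ⟨lb, hlb, hpb⟩ := hatoms b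
    have h1 := hlen la hla
    have h2 := hlen lb hlb
    have hmem : ∀ x ∈ la ++ lb, IsAtomOf M x := by
      intro x hx
      rcases List.mem_append.1 hx with h | h
      · exact hla x h
      · exact hlb x h
    have h3 := hlen (la ++ lb) hmem
    rw [List.prod_append, hpa, hpb] at h3
    rw [hpa] at h1
    rw [hpb] at h2
    simp only [List.length_append] at h3
    omega
  have hlen_one : len (1 : M) = 0 := by simpa using hlen [] (by simp)
  have hlen_eq_one : ∀ a : M, len a = 0 → a = 1 := by
    intro a h0
    obtain ⟨l, hl, hp⟩ := hatoms a
    have hll := hlen l hl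
    rw [hp] at hll
    have : l = [] := List.length_eq_zero_iff.mp (by omega)
    rw [this] at hp
    simpa using hp.symm
  have hunit : ∀ u v : M, u * v = 1 → u = 1 := by
    intro u v h
    have h1 := hlen_mul u v
    rw [h, hlen_one] at h1
    exact hlen_eq_one u (by omega)
  have hantisym : ∀ a b : M, LeftDvd a b → LeftDvd b a → a = b := by
    rintro a b ⟨u, hu⟩ ⟨v, hv⟩
    have hav : a * (u * v) = a * 1 := by
      rw [mul_one, ← mul_assoc, ← hu, ← hv]
    have huv : u * v = 1 := lcancel a _ _ hav
    have hu1 : u = 1 := hunit u v huv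
    rw [hu, hu1, mul_one]
  have hlen_le : ∀ a b : M, LeftDvd a b → len a ≤ len b := by
    rintro a b ⟨u, hu⟩
    rw [hu, hlen_mul]
    omega
  have hgcd : ∀ a b : M, ∃ g : M, IsLeftGcd a b g := by
    intro a b
    set P : ℕ → Prop := fun k => ∃ s : M, LeftDvd s a ∧ LeftDvd s b ∧ len s = k with hP
    have hP0 : P 0 := ⟨1, ⟨a, (one_mul a).symm⟩, ⟨b, (one_mul b).symm⟩, hlen_one⟩
    obtain ⟨g, hga, hgb, hglen⟩ := Nat.findGreatest_spec (Nat.zero_le (len a)) hP0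
    refine ⟨g, hga, hgb, ?_⟩
    intro s hsa hsb
    obtain ⟨m, hm⟩ := gs.rlcm g s
    have hma : LeftDvd m a := hm.2.2 a hga hsa
    have hmb : LeftDvd m b := hm.2.2 b hgb hsb
    have hlm : len m ≤ Nat.findGreatest P (len a) :=
      Nat.le_findGreatest (hlen_le m a hma) ⟨m, hma, hmb, rfl⟩
    obtain ⟨u, hu⟩ := hm.1
    have hlu : len u = 0 := by
      have := hlen_mul g u
      rw [← hu] at this
      omega
    have hu1 : u = 1 := hlen_eq_one u hlu
    have hmg : m = g := by rw [hu, hu1, mul_one]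
    rw [← hmg]
    exact hm.2.1
  obtain ⟨x, hx⟩ : LeftDvd c c' := hgreedy.2.2 c hc ⟨d, rfl⟩
  obtain ⟨t, ht⟩ := hc
  have hde : d = x * e := lcancel c _ _ (by rw [hcd, hx, mul_assoc])
  obtain ⟨u, hu⟩ := hgreedy.1
  have htx : t = x * u := lcancel c _ _ (by rw [← ht, hu, hx, mul_assoc])
  by_cases hx1 : x = 1
  · rw [hx1, one_mul] at hde
    rw [hx1, mul_one] at hx
    rw [hx, hde]
  · have htS : t ∈ gs.S := (gs.balanced t).mpr ⟨c, ht⟩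
    obtain ⟨g, hg⟩ := hgcd d t
    have hxg : LeftDvd x g := hg.2.2 x ⟨e, hde⟩ ⟨u, htx⟩
    have hg1 : g ≠ 1 := by
      intro h1
      rw [h1] at hxg
      obtain ⟨v, hv⟩ := hxg
      exact hx1 (hunit x v hv.symm)
    rcases hsp.1 d hd t htS g hg with hgd | hgt | h1
    · have hdt : LeftDvd d t := by rw [← hgd]; exact hg.2.1
      obtain ⟨s, hs⟩ := hdt
      have hcdΔ : LeftDvd (c * d) gs.Δ := ⟨s, by rw [ht, hs, mul_assoc]⟩
      have h1 : LeftDvd (c * d) c' :=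
        hgreedy.2.2 (c * d) hcdΔ ⟨1, (mul_one _).symm⟩
      have h2 : c * d = c' := hantisym _ _ h1 hgreedy.2.1
      rw [← h2]
      have := hlen_mul c d
      omega
    · have htd : LeftDvd t d := by rw [← hgt]; exact hg.1
      obtain ⟨s, hs⟩ := htd
      have hΔcd : LeftDvd gs.Δ (c * d) := ⟨s, by rw [hs, ht, mul_assoc]⟩
      have h1 : LeftDvd gs.Δ c' :=
        hgreedy.2.2 gs.Δ ⟨1, (mul_one _).symm⟩ hΔcd
      have h2 : gs.Δ = c' := hantisym _ _ h1 hgreedy.1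
      have hcΔ : len c ≤ len gs.Δ := hlen_le c _ ⟨t, ht⟩
      have hdΔ : len d ≤ len gs.Δ := hlen_le d _ hd
      rw [← h2]
      omega
    · exact absurd h1 hg1
end

section
/- Let B₃ = ⟨a, b | a² = b³⟩ be the 3-strand braid group presented as the (2,3)-torus knot group, and let F₂ = ⟨x, y⟩ be the free group of rank 2. Then the commutator subgroup [B₃, B₃] is isomorphic to F₂. -/
/-- The 3-strand braid group presented as the (2,3)-torus knot group
    ⟨a, b | a² = b³⟩ (a = generator 0, b = generator 1). -/
abbrev BraidThree : Type :=
  PresentedGroup ({FreeGroup.of 0 * FreeGroup.of 0 *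
    (FreeGroup.of 1 * FreeGroup.of 1 * FreeGroup.of 1)⁻¹} : Set (FreeGroup (Fin 2)))

namespace B3

open SemidirectProduct Multiplicative

abbrev F : Type := FreeGroup (Fin 2)

def X : F := FreeGroup.of 0
def Y : F := FreeGroup.of 1

def u : F →* F := FreeGroup.lift ![Y, X⁻¹ * Y]
def v : F →* F := FreeGroup.lift ![X * Y⁻¹, X]

@[simp] lemma u_X : u X = Y := by simp [u, X]
@[simp] lemma u_Y : u Y = X⁻¹ * Y := by simp [u, Y]
@[simp] lemma v_X : v X = X * Y⁻¹ := by simp [v, X]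
@[simp] lemma v_Y : v Y = X := by simp [v, Y]

lemma of0 : FreeGroup.of (0 : Fin 2) = X := rfl
lemma of1 : FreeGroup.of (1 : Fin 2) = Y := rfl

def α : F ≃* F :=
  MonoidHom.toMulEquiv u v
    (by apply FreeGroup.ext_hom; intro i; fin_cases i <;> simp [of0, of1])
    (by apply FreeGroup.ext_hom; intro i; fin_cases i <;> simp [of0, of1])

def φ : Multiplicative ℤ →* MulAut F := zpowersHom (MulAut F) α

abbrev G : Type := F ⋊[φ] Multiplicative ℤ

def t : G := inr (ofAdd 1)

lemma φ_ofAdd_one : φ (ofAdd 1) = α := by simp [φ, zpowersHom_apply]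

lemma α_coe (n : F) : α n = u n := rfl

lemma t_inl (n : F) : t * inl n = inl (u n) * t := by
  rw [t, show (u n) = φ (ofAdd 1) n from by rw [φ_ofAdd_one]; rfl, inl_aut,
    _root_.map_inv, inv_mul_cancel_right]

lemma t_inl_assoc (n : F) (c : G) : t * (inl n * c) = inl (u n) * (t * c) := by
  rw [← mul_assoc, t_inl, mul_assoc]

lemma tinv_inl (n : F) : t⁻¹ * inl n = inl (v n) * t⁻¹ := by
  have : v n = (φ (ofAdd 1))⁻¹ n := by rw [φ_ofAdd_one]; rfl
  rw [t, this, inl_aut_inv, mul_inv_cancel_right]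
  simp

lemma tinv_inl_assoc (n : F) (c : G) : t⁻¹ * (inl n * c) = inl (v n) * (t⁻¹ * c) := by
  rw [← mul_assoc, tinv_inl, mul_assoc]

lemma inl_inl (m n : F) : (inl m : G) * inl n = inl (m * n) := ((inl : F →* G).map_mul m n).symm

lemma inl_inl_assoc (m n : F) (c : G) : (inl m : G) * (inl n * c) = inl (m * n) * c := by
  rw [← mul_assoc, inl_inl]

lemma inl_inv (n : F) : (inl n : G)⁻¹ = inl n⁻¹ := by simp

/- ### the map from BraidThree to G -/

def fgen : Fin 2 → G := ![t * inl X * t * t, t * inl X * t]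

lemma hf : ∀ r ∈ ({FreeGroup.of 0 * FreeGroup.of 0 *
    (FreeGroup.of 1 * FreeGroup.of 1 * FreeGroup.of 1)⁻¹} : Set (FreeGroup (Fin 2))),
    FreeGroup.lift fgen r = 1 := by
  intro r hr
  rw [Set.mem_singleton_iff] at hr
  subst hr
  simp only [_root_.map_mul, _root_.map_inv, FreeGroup.lift_apply_of, fgen]
  simp only [Matrix.cons_val_zero, Matrix.cons_val_one, Matrix.head_cons]
  rw [mul_inv_eq_one]
  simp only [mul_assoc]
  simp only [t_inl_assoc, t_inl, inl_inl_assoc, inl_inl]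
  congr 1
  simp [_root_.map_mul, _root_.map_inv, u_X, u_Y]

def f : BraidThree →* G := PresentedGroup.toGroup hf

lemma f_a : f (.of 0) = t * inl X * t * t := by
  simp [f, PresentedGroup.toGroup.of, fgen]

lemma f_b : f (.of 1) = t * inl X * t := by
  simp [f, PresentedGroup.toGroup.of, fgen]

/- ### the map from G to BraidThree -/

def Pa : BraidThree := .of 0
def Pb : BraidThree := .of 1
def T : BraidThree := Pb⁻¹ * Pa
def XB : BraidThree := Pa⁻¹ * Pb * Pb * Pa⁻¹ * Pb
def YB : BraidThree := Pb * Pa⁻¹ * Pb * Pa⁻¹ * Pb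

lemma hrel : Pa * Pa = Pb * Pb * Pb := by
  have mem : (FreeGroup.of 0 * FreeGroup.of 0 *
      (FreeGroup.of 1 * FreeGroup.of 1 * FreeGroup.of 1)⁻¹) ∈
      Subgroup.normalClosure ({FreeGroup.of 0 * FreeGroup.of 0 *
        (FreeGroup.of 1 * FreeGroup.of 1 * FreeGroup.of 1)⁻¹} : Set (FreeGroup (Fin 2))) :=
    Subgroup.subset_normalClosure rfl
  have h : (PresentedGroup.mk _ (FreeGroup.of 0 * FreeGroup.of 0 *
      (FreeGroup.of 1 * FreeGroup.of 1 * FreeGroup.of 1)⁻¹) : BraidThree) = 1 :=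
    (QuotientGroup.eq_one_iff _).mpr mem
  rw [_root_.map_mul, _root_.map_mul, _root_.map_inv, _root_.map_mul, _root_.map_mul,
    mul_inv_eq_one] at h
  exact h

def g1 : F →* BraidThree := FreeGroup.lift ![XB, YB]
def g2 : Multiplicative ℤ →* BraidThree := zpowersHom _ T

@[simp] lemma g1_X : g1 X = XB := by simp [g1, X]
@[simp] lemma g1_Y : g1 Y = YB := by simp [g1, Y]
@[simp] lemma g2_one : g2 (ofAdd 1) = T := by simp [g2, zpowersHom_apply]

lemma conj_X : T * XB * T⁻¹ = YB := by
  rw [T, XB, YB]; group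

lemma conj_Y : T * YB * T⁻¹ = XB⁻¹ * YB := by
  have h1 : Pa * (Pb * Pa⁻¹) = Pa * (Pb⁻¹ * (Pb⁻¹ * Pa)) := by
    have h : Pb * Pa⁻¹ = Pb⁻¹ * (Pb⁻¹ * Pa) := by
      rw [mul_inv_eq_iff_eq_mul,
        show Pb⁻¹ * (Pb⁻¹ * Pa) * Pa = Pb⁻¹ * Pb⁻¹ * (Pa * Pa) from by group, hrel]
      group
    rw [h]
  calc T * YB * T⁻¹
      = Pb⁻¹ * (Pa * (Pb * Pa⁻¹)) * (Pb * Pa⁻¹ * Pb * Pa⁻¹ * Pb) := by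
        rw [T, YB]; group
    _ = Pb⁻¹ * (Pa * (Pb⁻¹ * (Pb⁻¹ * Pa))) * (Pb * Pa⁻¹ * Pb * Pa⁻¹ * Pb) := by
        rw [h1]
    _ = XB⁻¹ * YB := by rw [XB, YB]; group

lemma key_base' : g1.comp (α : F ≃* F).toMonoidHom = (MulAut.conj T).toMonoidHom.comp g1 := by
  apply FreeGroup.ext_hom
  intro i
  fin_cases i
  · show g1 (α X) = MulAut.conj T (g1 X)
    rw [α_coe, u_X, g1_X, g1_Y, MulAut.conj_apply, conj_X]
  · show g1 (α Y) = MulAut.conj T (g1 Y)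
    rw [α_coe, u_Y, _root_.map_mul, _root_.map_inv, g1_X, g1_Y, MulAut.conj_apply, conj_Y]

lemma key_base : ∀ m : F, g1 (α m) = T * g1 m * T⁻¹ := by
  intro m
  have := DFunLike.congr_fun key_base' m
  simpa using this

lemma hcomp : ∀ z : Multiplicative ℤ,
    g1.comp (φ z).toMonoidHom = (MulAut.conj (g2 z)).toMonoidHom.comp g1 := by
  have hP : ∀ z : Multiplicative ℤ, ∀ m : F, g1 (φ z m) = g2 z * g1 m * (g2 z)⁻¹ := by
    let S : Subgroup (Multiplicative ℤ) :=
      { carrier := {z | ∀ m : F, g1 (φ z m) = g2 z * g1 m * (g2 z)⁻¹}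
        one_mem' := by intro m; simp
        mul_mem' := by
          intro z w hz hw m
          rw [show φ (z * w) m = φ z (φ w m) from by rw [_root_.map_mul]; rfl,
            hz, hw, _root_.map_mul]
          group
        inv_mem' := by
          intro z hz m
          have h := hz (φ z⁻¹ m)
          rw [show φ z (φ z⁻¹ m) = m from by
            rw [← MulAut.mul_apply, ← _root_.map_mul, mul_inv_cancel, _root_.map_one]; rfl] at h
          have h' : g1 (φ z⁻¹ m) = (g2 z)⁻¹ * g1 m * g2 z := by
            rw [h]; group
          rw [h', show g2 z⁻¹ = (g2 z)⁻¹ from _root_.map_inv g2 z]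
          group }
    have hgen : (ofAdd 1 : Multiplicative ℤ) ∈ S := by
      intro m
      rw [φ_ofAdd_one, g2_one, key_base]
    intro z
    have hz : z = (ofAdd 1 : Multiplicative ℤ) ^ (z.toAdd) := by
      rw [← ofAdd_zsmul]; simp
    have : z ∈ S := by rw [hz]; exact Subgroup.zpow_mem S hgen _
    exact this
  intro z
  ext m
  exact hP z (FreeGroup.of m)

def g : G →* BraidThree := SemidirectProduct.lift g1 g2 hcomp

@[simp] lemma g_t : g t = T := by
  rw [t, g, lift_inr, g2_one]

@[simp] lemma g_inl (n : F) : g (inl n) = g1 n := by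
  rw [g, lift_inl]

/- ### the two compositions -/

lemma gf : g.comp f = MonoidHom.id _ := by
  apply PresentedGroup.ext
  intro i
  fin_cases i
  · show g (f (PresentedGroup.of 0)) = Pa
    rw [f_a]
    simp only [_root_.map_mul, g_t, g_inl, g1_X]
    rw [T, XB]
    group
  · show g (f (PresentedGroup.of 1)) = Pb
    rw [f_b]
    simp only [_root_.map_mul, g_t, g_inl, g1_X]
    rw [T, XB]
    group

lemma f_Pa : f Pa = t * inl X * t * t := f_a
lemma f_Pb : f Pb = t * inl X * t := f_b

lemma fg : f.comp g = MonoidHom.id _ := by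
  apply SemidirectProduct.hom_ext
  · apply FreeGroup.ext_hom
    intro i
    fin_cases i
    · show f (g (inl X)) = inl X
      rw [g_inl, g1_X, XB]
      simp only [_root_.map_mul, _root_.map_inv, f_Pa, f_Pb]
      simp only [mul_inv_rev, inl_inv, mul_assoc]
      simp only [t_inl_assoc, t_inl, tinv_inl_assoc, tinv_inl, inl_inl_assoc, inl_inl,
        inv_mul_cancel_left, mul_inv_cancel_left, inv_mul_cancel, mul_inv_cancel, mul_one]
      refine congrArg _ ?_
      simp [_root_.map_mul, _root_.map_inv]
    · show f (g (inl Y)) = inl Y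
      rw [g_inl, g1_Y, YB]
      simp only [_root_.map_mul, _root_.map_inv, f_Pa, f_Pb]
      simp only [mul_inv_rev, inl_inv, mul_assoc]
      simp only [t_inl_assoc, t_inl, tinv_inl_assoc, tinv_inl, inl_inl_assoc, inl_inl,
        inv_mul_cancel_left, mul_inv_cancel_left, inv_mul_cancel, mul_inv_cancel, mul_one]
      refine congrArg _ ?_
      simp [_root_.map_mul, _root_.map_inv]
  · apply MonoidHom.ext_mint
    show f (g (inr (ofAdd 1))) = inr (ofAdd 1)
    rw [show (inr (ofAdd 1) : G) = t from rfl, g_t, T]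
    simp only [_root_.map_mul, _root_.map_inv, f_Pa, f_Pb]
    simp only [mul_inv_rev, inl_inv, mul_assoc]
    simp only [t_inl_assoc, t_inl, tinv_inl_assoc, tinv_inl, inl_inl_assoc, inl_inl,
      inv_mul_cancel_left, mul_inv_cancel_left, inv_mul_cancel, mul_inv_cancel, mul_one]
    simp

def Φ : BraidThree ≃* G := MonoidHom.toMulEquiv f g gf fg

/- ### the commutator subgroup of G -/

open scoped commutatorElement in
lemma xh_mem : (inl X : G) ∈ commutator G := by
  have h : ⁅t, (inl Y : G)⁆ = inl X⁻¹ := by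
    rw [commutatorElement_def, t_inl, u_Y, mul_inv_cancel_right, inl_inv, inl_inl]
    congr 1
    group
  have h2 : (inl X⁻¹ : G) ∈ commutator G := by
    rw [← h, commutator_def]
    exact Subgroup.commutator_mem_commutator (Subgroup.mem_top _) (Subgroup.mem_top _)
  have : (inl X : G) = (inl X⁻¹ : G)⁻¹ := by rw [inl_inv]; congr 1
  rw [this]
  exact Subgroup.inv_mem _ h2
open scoped commutatorElement in
lemma yh_mem : (inl Y : G) ∈ commutator G := by
  have h : ⁅t, (inl X : G)⁆ = inl (Y * X⁻¹) := by
    rw [commutatorElement_def, t_inl, u_X, mul_inv_cancel_right, inl_inv, inl_inl]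
  have h2 : (inl (Y * X⁻¹) : G) ∈ commutator G := by
    rw [← h, commutator_def]
    exact Subgroup.commutator_mem_commutator (Subgroup.mem_top _) (Subgroup.mem_top _)
  have : (inl Y : G) = inl (Y * X⁻¹) * inl X := by rw [inl_inl]; congr 1; group
  rw [this]
  exact Subgroup.mul_mem _ h2 xh_mem

lemma comm_G : commutator G = (inl : F →* G).range := by
  apply le_antisymm
  · rw [range_inl_eq_ker_rightHom]
    exact Abelianization.commutator_subset_ker rightHom
  · rintro w ⟨n, rfl⟩
    induction n using FreeGroup.induction_on with
    | C1 => simpa using Subgroup.one_mem _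
    | of i =>
        fin_cases i
        · exact xh_mem
        · exact yh_mem
    | inv_of i ih =>
        rw [show (inl ((FreeGroup.of i : F)⁻¹) : G) = (inl (FreeGroup.of i : F))⁻¹ from _root_.map_inv inl _]
        exact Subgroup.inv_mem _ ih
    | mul a b iha ihb =>
        rw [_root_.map_mul]
        exact Subgroup.mul_mem _ iha ihb

lemma comm_map : (commutator BraidThree).map Φ.toMonoidHom = commutator G := by
  rw [commutator_def, commutator_def, Subgroup.map_commutator,
    Subgroup.map_top_of_surjective Φ.toMonoidHom (by exact Φ.surjective)]

end B3

/-- The commutator subgroup [B₃, B₃] is isomorphic to the free group of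
    rank 2. -/
theorem stmt_10 :
    Nonempty ((commutator BraidThree) ≃* FreeGroup (Fin 2)) := by
  refine ⟨?_⟩
  have e1 : commutator BraidThree ≃* (commutator BraidThree).map B3.Φ.toMonoidHom :=
    B3.Φ.subgroupMap _
  rw [B3.comm_map, B3.comm_G] at e1
  exact e1.trans (MonoidHom.ofInjective SemidirectProduct.inl_injective).symm
end

section
/- In the free group F₂ = ⟨a, b⟩ with automorphism φ given by φ(a) = b, φ(b) = b·a⁻¹·b², the freely reduced word representing φᵐ(b) has length Φ^(2m+1) − Φ^(−(2m+1)) where Φ = (1+√5)/2; equivalently, the lengths satisfy ℓ(0)=1, ℓ(1)=4, ℓ(m)=3ℓ(m−1)−ℓ(m−2). -/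
/-- The endomorphism φ of the free group F₂ = ⟨a, b⟩ (a = of false,
    b = of true) given by φ(a) = b, φ(b) = b·a⁻¹·b². -/
def phiF2 : FreeGroup Bool →* FreeGroup Bool :=
  FreeGroup.lift fun x : Bool =>
    if x then
      FreeGroup.of true * (FreeGroup.of false)⁻¹ *
        FreeGroup.of true * FreeGroup.of true
    else FreeGroup.of true

namespace Stmt12Aux

/-- Token substitution: `true` (the token b) ↦ p b b, `false` (the token p = b·a⁻¹) ↦ p b. -/
def tok : Bool → List Bool
  | true => [false, true, true]
  | false => [false, true]

/-- Iterated substitution starting from the single token b. -/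
def S : ℕ → List Bool
  | 0 => [true]
  | m + 1 => (S m).flatMap tok

/-- Expansion of tokens into letters of the free group word:
    b ↦ [b], p ↦ [b, a⁻¹]. -/
def expand : Bool → List (Bool × Bool)
  | true => [(true, true)]
  | false => [(true, true), (false, false)]

lemma expand_snd_eq_fst : ∀ t : Bool, ∀ p ∈ expand t, p.2 = p.1 := by
  decide

lemma flatMap_expand_snd_eq_fst (L : List Bool) :
    ∀ p ∈ L.flatMap expand, p.2 = p.1 := by
  intro p hp
  rw [List.mem_flatMap] at hp
  obtain ⟨t, _, hp⟩ := hp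
  exact expand_snd_eq_fst t p hp

/-- A word whose every letter `(x, b)` satisfies `b = x` is reduced. -/
lemma reduce_eq_self_of_snd_eq_fst (L : List (Bool × Bool))
    (h : ∀ p ∈ L, p.2 = p.1) : FreeGroup.reduce L = L := by
  have hred : FreeGroup.Red L (FreeGroup.reduce L) := FreeGroup.reduce.red
  rcases Relation.ReflTransGen.cases_head hred with heq | ⟨c, hstep, _⟩
  · exact heq.symm
  · exfalso
    cases hstep with
    | @not L₁ L₂ x b =>
      have h1 := h (x, b) (by simp)
      have h2 := h (x, !b) (by simp)
      simp at h1 h2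
      rw [h1] at h2
      simp at h2

lemma phi_of_true :
    phiF2 (FreeGroup.of true) =
      FreeGroup.of true * (FreeGroup.of false)⁻¹ *
        FreeGroup.of true * FreeGroup.of true := by
  simp [phiF2]

lemma phi_of_false : phiF2 (FreeGroup.of false) = FreeGroup.of true := by
  simp [phiF2]

lemma mk_expand (t : Bool) :
    FreeGroup.mk (expand t) =
      if t then FreeGroup.of true
      else FreeGroup.of true * (FreeGroup.of false)⁻¹ := by
  cases t <;>
    simp [expand, FreeGroup.of, FreeGroup.inv_mk, FreeGroup.invRev,
      FreeGroup.mul_mk]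

lemma phi_letter (t : Bool) :
    phiF2 (FreeGroup.mk (expand t)) = FreeGroup.mk ((tok t).flatMap expand) := by
  cases t <;>
    simp [tok, List.flatMap, map_mul, map_inv, phi_of_true, phi_of_false,
      ← FreeGroup.mul_mk, mk_expand, mul_assoc]

lemma mk_flatMap_append (L₁ L₂ : List Bool) :
    FreeGroup.mk ((L₁ ++ L₂).flatMap expand) =
      FreeGroup.mk (L₁.flatMap expand) * FreeGroup.mk (L₂.flatMap expand) := by
  rw [FreeGroup.mul_mk, List.flatMap_append]

lemma phi_word (L : List Bool) :
    phiF2 (FreeGroup.mk (L.flatMap expand)) =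
      FreeGroup.mk ((L.flatMap tok).flatMap expand) := by
  induction L with
  | nil => simp [FreeGroup.one_eq_mk.symm]
  | cons t L ih =>
    rw [show (t :: L) = [t] ++ L from rfl, mk_flatMap_append, map_mul, ih,
      List.flatMap_append, List.flatMap_append, ← FreeGroup.mul_mk]
    congr 1
    simpa [List.flatMap_cons] using phi_letter t

lemma mk_S (m : ℕ) :
    FreeGroup.mk ((S m).flatMap expand) = (⇑phiF2)^[m] (FreeGroup.of true) := by
  induction m with
  | zero => simp [S, expand, FreeGroup.of, List.flatMap]
  | succ m ih =>
    rw [Function.iterate_succ_apply', ← ih, phi_word]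
    rfl

lemma norm_S (m : ℕ) :
    FreeGroup.norm ((⇑phiF2)^[m] (FreeGroup.of true)) =
      ((S m).flatMap expand).length := by
  rw [← mk_S]
  show (FreeGroup.mk ((S m).flatMap expand)).toWord.length = _
  rw [FreeGroup.toWord_mk,
    reduce_eq_self_of_snd_eq_fst _ (flatMap_expand_snd_eq_fst _)]

lemma length_flatMap_expand (L : List Bool) :
    (L.flatMap expand).length = L.count true + 2 * L.count false := by
  induction L with
  | nil => simp
  | cons t L ih =>
    cases t <;> simp [expand, List.count_cons, ih] <;> omega

lemma count_true_flatMap_tok (L : List Bool) :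
    (L.flatMap tok).count true = 2 * L.count true + L.count false := by
  induction L with
  | nil => rfl
  | cons t L ih =>
    rw [List.flatMap_cons, List.count_append, ih]
    cases t <;> rw [List.count_cons, List.count_cons] <;>
      simp [tok] <;> omega

lemma count_false_flatMap_tok (L : List Bool) :
    (L.flatMap tok).count false = L.count true + L.count false := by
  induction L with
  | nil => rfl
  | cons t L ih =>
    have hlen := List.count_true_add_count_false L
    rw [List.flatMap_cons, List.count_append, ih]
    cases t <;> rw [List.count_cons, List.count_cons] <;>
      simp [tok] <;> omega

lemma closed_form (m : ℕ) :
    (((S m).count true : ℝ)) * Real.sqrt 5 =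
        ((1 + Real.sqrt 5) / 2) ^ (2 * m + 1) +
          ((Real.sqrt 5 - 1) / 2) ^ (2 * m + 1) ∧
      (((S m).count false : ℝ)) * Real.sqrt 5 =
        ((1 + Real.sqrt 5) / 2) ^ (2 * m) -
          ((Real.sqrt 5 - 1) / 2) ^ (2 * m) := by
  set s : ℝ := Real.sqrt 5 with hs_def
  have hs : s ^ 2 = 5 := Real.sq_sqrt (by norm_num)
  set Φ : ℝ := (1 + s) / 2 with hΦ
  set Q : ℝ := (s - 1) / 2 with hQ
  have hΦ3 : Φ ^ 3 = 2 * Φ + 1 := by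
    rw [hΦ]; linear_combination ((s + 3) / 8) * hs
  have hQ3 : Q ^ 3 = 2 * Q - 1 := by
    rw [hQ]; linear_combination ((s - 3) / 8) * hs
  have hΦ2 : Φ ^ 2 = Φ + 1 := by
    rw [hΦ]; linear_combination (1 / 4) * hs
  have hQ2 : Q ^ 2 = 1 - Q := by
    rw [hQ]; linear_combination (1 / 4) * hs
  induction m with
  | zero =>
    constructor
    · simp [S]
      rw [hΦ, hQ]; ring
    · simp [S]
  | succ m ih =>
    obtain ⟨iht, ihf⟩ := ih
    have hS : S (m + 1) = (S m).flatMap tok := rfl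
    have hct : ((S (m + 1)).count true : ℝ) =
        2 * ((S m).count true : ℝ) + ((S m).count false : ℝ) := by
      rw [hS, count_true_flatMap_tok]; push_cast; ring
    have hcf : ((S (m + 1)).count false : ℝ) =
        ((S m).count true : ℝ) + ((S m).count false : ℝ) := by
      rw [hS, count_false_flatMap_tok]; push_cast; ring
    have e1 : 2 * (m + 1) + 1 = 2 * m + 3 := by ring
    have e2 : 2 * (m + 1) = 2 * m + 2 := by ring
    constructor
    · rw [hct, e1]
      have : Φ ^ (2 * m + 3) = Φ ^ (2 * m) * Φ ^ 3 := by rw [← pow_add]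
      rw [this, hΦ3]
      have : Q ^ (2 * m + 3) = Q ^ (2 * m) * Q ^ 3 := by rw [← pow_add]
      rw [this, hQ3]
      have hΦ1 : Φ ^ (2 * m + 1) = Φ ^ (2 * m) * Φ := by rw [← pow_succ]
      have hQ1 : Q ^ (2 * m + 1) = Q ^ (2 * m) * Q := by rw [← pow_succ]
      rw [hΦ1, hQ1] at iht
      linear_combination 2 * iht + ihf
    · rw [hcf, e2]
      have : Φ ^ (2 * m + 2) = Φ ^ (2 * m) * Φ ^ 2 := by rw [← pow_add]
      rw [this, hΦ2]
      have : Q ^ (2 * m + 2) = Q ^ (2 * m) * Q ^ 2 := by rw [← pow_add]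
      rw [this, hQ2]
      have hΦ1 : Φ ^ (2 * m + 1) = Φ ^ (2 * m) * Φ := by rw [← pow_succ]
      have hQ1 : Q ^ (2 * m + 1) = Q ^ (2 * m) * Q := by rw [← pow_succ]
      rw [hΦ1, hQ1] at iht
      linear_combination iht + ihf

end Stmt12Aux

/-- The freely reduced word representing φᵐ(b) has length
    Φ^(2m+1) − Φ^(−(2m+1)), where Φ = (1+√5)/2. -/
theorem stmt_12 (m : ℕ) :
    ((FreeGroup.norm ((⇑phiF2)^[m] (FreeGroup.of true))) : ℝ) =
      ((1 + Real.sqrt 5) / 2) ^ (2 * m + 1) -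
        (((1 + Real.sqrt 5) / 2)⁻¹) ^ (2 * m + 1) := by
  set s : ℝ := Real.sqrt 5 with hs_def
  have hs : s ^ 2 = 5 := Real.sq_sqrt (by norm_num)
  have hspos : (0 : ℝ) < s := Real.sqrt_pos.mpr (by norm_num)
  set Φ : ℝ := (1 + s) / 2 with hΦ
  set Q : ℝ := (s - 1) / 2 with hQ
  have hΦne : Φ ≠ 0 := by
    rw [hΦ]; positivity
  have hinv : Φ⁻¹ = Q := by
    apply inv_eq_of_mul_eq_one_right
    rw [hΦ, hQ]
    linear_combination (1 / 4) * hs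
  rw [hinv]
  obtain ⟨iht, ihf⟩ := Stmt12Aux.closed_form m
  rw [Stmt12Aux.norm_S, Stmt12Aux.length_flatMap_expand]
  have hsΦ : s * Φ = Φ + 2 := by
    rw [hΦ]; linear_combination (1 / 2) * hs
  have hsQ : s * Q = 2 - Q := by
    rw [hQ]; linear_combination (1 / 2) * hs
  have key : ((Stmt12Aux.S m).count true + 2 * (Stmt12Aux.S m).count false : ℝ)
      * s = (Φ ^ (2 * m + 1) - Q ^ (2 * m + 1)) * s := by
    have hΦ1 : Φ ^ (2 * m + 1) = Φ ^ (2 * m) * Φ := by rw [← pow_succ]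
    have hQ1 : Q ^ (2 * m + 1) = Q ^ (2 * m) * Q := by rw [← pow_succ]
    rw [hΦ1, hQ1] at iht ⊢
    calc ((Stmt12Aux.S m).count true + 2 * (Stmt12Aux.S m).count false : ℝ) * s
        = ((Stmt12Aux.S m).count true : ℝ) * s
            + 2 * (((Stmt12Aux.S m).count false : ℝ) * s) := by ring
      _ = Φ ^ (2 * m) * Φ + Q ^ (2 * m) * Q
            + 2 * (Φ ^ (2 * m) - Q ^ (2 * m)) := by rw [iht, ihf]
      _ = Φ ^ (2 * m) * (Φ + 2) - Q ^ (2 * m) * (2 - Q) := by ring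
      _ = Φ ^ (2 * m) * (s * Φ) - Q ^ (2 * m) * (s * Q) := by rw [hsΦ, hsQ]
      _ = (Φ ^ (2 * m) * Φ - Q ^ (2 * m) * Q) * s := by ring
  have := mul_right_cancel₀ (ne_of_gt hspos) key
  push_cast
  push_cast at this
  linarith [this]
end

section
/- In the torus knot group T(p,q) = ⟨a, b | aᵖ = bᑫ⟩ with 2 ≤ p < q, the element Δ = aᵖ = bᑫ is central, and the submonoid generated by a and b has the property that the set of left divisors of Δ in the monoid is {1, a, a², …, a^{p−1}, b, b², …, b^{q−1}, Δ} and equals the set of right divisors of Δ. -/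
/-- The torus knot group T(p,q) = ⟨a, b | aᵖ = bᑫ⟩
    (a = of true, b = of false). -/
abbrev TorusKnotGroup (p q : ℕ) : Type :=
  PresentedGroup ({FreeGroup.of true ^ p * (FreeGroup.of false ^ q)⁻¹} :
    Set (FreeGroup Bool))

/-- The generator a of T(p,q). -/
def tkA (p q : ℕ) : TorusKnotGroup p q := PresentedGroup.of true

/-- The generator b of T(p,q). -/
def tkB (p q : ℕ) : TorusKnotGroup p q := PresentedGroup.of false

/-- The positive monoid T⁺(p,q): the submonoid generated by a and b. -/
def tkPos (p q : ℕ) : Submonoid (TorusKnotGroup p q) :=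
  Submonoid.closure {tkA p q, tkB p q}
namespace TKAux
open Monoid

variable (p q : ℕ)

abbrev M : Bool → Type := fun i => Multiplicative (ZMod (cond i p q))

abbrev G := Monoid.CoprodI (M p q)

def gen (i : Bool) : G p q := Monoid.CoprodI.of (Multiplicative.ofAdd (1 : ZMod (cond i p q)))

lemma gen_pow_eq_one (i : Bool) : gen p q i ^ (cond i p q) = 1 := by
  rw [gen, ← map_pow, ← ofAdd_nsmul, nsmul_eq_mul, mul_one, ZMod.natCast_self, ofAdd_zero,
    map_one]

/-- The projection T(p,q) → ℤ/p * ℤ/q. -/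
def pi : TorusKnotGroup p q →* G p q :=
  PresentedGroup.toGroup (f := gen p q) (by
    rintro r hr
    rw [Set.mem_singleton_iff] at hr
    subst hr
    simp only [map_mul, map_inv, map_pow, FreeGroup.lift_apply_of]
    rw [show gen p q true ^ p = 1 from gen_pow_eq_one p q true,
      show gen p q false ^ q = 1 from gen_pow_eq_one p q false]
    simp)

@[simp] lemma pi_a : pi p q (tkA p q) = gen p q true := PresentedGroup.toGroup.of _
@[simp] lemma pi_b : pi p q (tkB p q) = gen p q false := PresentedGroup.toGroup.of _

/-- The length homomorphism. -/
def ell : TorusKnotGroup p q →* Multiplicative ℤ :=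
  PresentedGroup.toGroup (f := fun i => Multiplicative.ofAdd (cond i (q : ℤ) (p : ℤ))) (by
    rintro r hr
    rw [Set.mem_singleton_iff] at hr
    subst hr
    simp only [map_mul, map_inv, map_pow, FreeGroup.lift_apply_of]
    rw [← ofAdd_nsmul, ← ofAdd_nsmul]
    simp [mul_comm])

def L (x : TorusKnotGroup p q) : ℤ := Multiplicative.toAdd (ell p q x)

@[simp] lemma L_a : L p q (tkA p q) = q := by
  simp [L, ell, tkA, PresentedGroup.toGroup.of]

@[simp] lemma L_b : L p q (tkB p q) = p := by
  simp [L, ell, tkB, PresentedGroup.toGroup.of]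

lemma L_mul (x y : TorusKnotGroup p q) : L p q (x * y) = L p q x + L p q y := by
  simp [L, map_mul]

lemma L_pow (x : TorusKnotGroup p q) (n : ℕ) : L p q (x ^ n) = n * L p q x := by
  simp [L, map_pow, toAdd_pow, mul_comm]

lemma rel_ab : (tkA p q) ^ p = (tkB p q) ^ q := by
  have h : PresentedGroup.mk _ (FreeGroup.of true ^ p * (FreeGroup.of false ^ q)⁻¹) =
      (1 : TorusKnotGroup p q) := by
    rw [show (1 : TorusKnotGroup p q) = PresentedGroup.mk _ 1 from (map_one _).symm]
    apply (QuotientGroup.eq_one_iff _).mpr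
    exact Subgroup.subset_normalClosure rfl
  rw [map_mul, map_inv, map_pow, map_pow] at h
  have := mul_inv_eq_one.mp h
  exact this


section Words
open Monoid.CoprodI

def wgt (l : Σ i, M p q i) : ℕ := (Multiplicative.toAdd l.2).val * (cond l.1 q p)

def Cw (w : Word (M p q)) : ℕ := (w.toList.map (wgt p q)).sum

def C (g : G p q) : ℕ := Cw p q (Word.equiv g)

variable {p q}

lemma wgt_one (hp : p ≠ 0) (hq : q ≠ 0) (i : Bool) :
    wgt p q ⟨i, 1⟩ = 0 := by
  haveI : NeZero p := ⟨hp⟩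
  haveI : NeZero q := ⟨hq⟩
  cases i <;> simp [wgt]

lemma Cw_rcons (hp : p ≠ 0) (hq : q ≠ 0) {i : Bool} (pr : Word.Pair (M p q) i) :
    Cw p q (Word.rcons pr) = wgt p q ⟨i, pr.head⟩ + Cw p q pr.tail := by
  rw [Word.rcons]
  split_ifs with h
  · rw [h, wgt_one hp hq, zero_add]
  · simp [Cw, Word.cons]

lemma equiv_symm_eq (w : Word (M p q)) : Word.equiv.symm w = Word.prod w := rfl

lemma prod_equiv (g : G p q) : Word.prod (Word.equiv g) = g := by
  rw [← equiv_symm_eq]; exact Word.equiv.symm_apply_apply g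

lemma equiv_mul (x g : G p q) : Word.equiv (x * g) = x • Word.equiv g := by
  apply Word.equiv.apply_eq_iff_eq_symm_apply.mpr
  rw [equiv_symm_eq, Word.prod_smul, prod_equiv]

lemma wgt_mul_le (hp : p ≠ 0) (hq : q ≠ 0) (i : Bool) (m h : M p q i) :
    wgt p q ⟨i, m * h⟩ ≤ wgt p q ⟨i, m⟩ + wgt p q ⟨i, h⟩ := by
  haveI : NeZero p := ⟨hp⟩
  haveI : NeZero q := ⟨hq⟩
  have key : ∀ (n c : ℕ) [NeZero n] (x y : ZMod n),
      (x + y).val * c ≤ x.val * c + y.val * c := by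
    intro n c _ x y
    rw [ZMod.val_add, ← add_mul]
    exact Nat.mul_le_mul_right c (Nat.mod_le _ _)
  cases i
  · exact key q p _ _
  · exact key p q _ _

lemma C_gen_mul_le (hp : p ≠ 0) (hq : q ≠ 0) (hp1 : 1 < p) (hq1 : 1 < q) (i : Bool) (g : G p q) :
    C p q (gen p q i * g) ≤ cond i q p + C p q g := by
  haveI : Fact (1 < p) := ⟨hp1⟩
  haveI : Fact (1 < q) := ⟨hq1⟩
  rw [C, C, equiv_mul, gen, Word.of_smul_def, Cw_rcons hp hq]
  have hw : Cw p q (Word.equiv g) =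
      wgt p q ⟨i, (Word.equivPair i (Word.equiv g)).head⟩ +
        Cw p q (Word.equivPair i (Word.equiv g)).tail := by
    conv_lhs => rw [show Word.equiv g =
      (Word.equivPair i).symm (Word.equivPair i (Word.equiv g)) from
        (Equiv.symm_apply_apply _ _).symm, Word.equivPair_symm, Cw_rcons hp hq]
  rw [hw]
  have h1 : wgt p q ⟨i, Multiplicative.ofAdd (1 : ZMod (cond i p q))⟩ = cond i q p := by
    cases i <;> simp [wgt, ZMod.val_one]
  calc wgt p q ⟨i, Multiplicative.ofAdd 1 * (Word.equivPair i (Word.equiv g)).head⟩ +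
        Cw p q (Word.equivPair i (Word.equiv g)).tail
      ≤ (wgt p q ⟨i, Multiplicative.ofAdd (1 : ZMod (cond i p q))⟩ +
          wgt p q ⟨i, (Word.equivPair i (Word.equiv g)).head⟩) +
        Cw p q (Word.equivPair i (Word.equiv g)).tail := by
        exact Nat.add_le_add_right (wgt_mul_le hp hq i _ _) _
    _ = cond i q p + _ := by rw [h1]; ring

end Words


variable {p q}

lemma delta_central (g : TorusKnotGroup p q) :
    tkA p q ^ p * g = g * tkA p q ^ p := by
  have key : ∀ j : Bool,
      (PresentedGroup.of j : TorusKnotGroup p q) ∈ Subgroup.centralizer {tkA p q ^ p} := by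
    intro j
    rw [Subgroup.mem_centralizer_iff]
    rintro h rfl
    cases j
    · -- b
      show tkA p q ^ p * tkB p q = tkB p q * tkA p q ^ p
      rw [rel_ab]
      rw [← pow_succ, ← pow_succ']
    · show tkA p q ^ p * tkA p q = tkA p q * tkA p q ^ p
      rw [← pow_succ, ← pow_succ']
  have := PresentedGroup.generated_by _ _ key g
  rw [Subgroup.mem_centralizer_iff] at this
  exact this _ rfl

lemma L_nonneg {x : TorusKnotGroup p q} (hx : x ∈ tkPos p q) : 0 ≤ L p q x := by
  induction hx using Submonoid.closure_induction with
  | mem z hz =>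
    rcases hz with rfl | rfl
    · rw [L_a]; positivity
    · rw [L_b]; positivity
  | one => simp [L]
  | mul z w _ _ hz hw => rw [L_mul]; omega

open Monoid.CoprodI in
lemma C_one (hp : p ≠ 0) (hq : q ≠ 0) : C p q 1 = 0 := by
  have : Word.equiv (1 : G p q) = Word.empty := by
    apply Word.equiv.apply_eq_iff_eq_symm_apply.mpr
    rw [equiv_symm_eq, Word.prod_empty]
  rw [C, this]
  simp [Cw, Word.empty]

open Monoid.CoprodI in
lemma pos_C_le (hp : 2 ≤ p) (hpq : p < q) {x : TorusKnotGroup p q} (hx : x ∈ tkPos p q) :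
    (C p q (pi p q x) : ℤ) ≤ L p q x := by
  have hp0 : p ≠ 0 := by omega
  have hq0 : q ≠ 0 := by omega
  induction hx using Submonoid.closure_induction_left with
  | one => rw [map_one, C_one hp0 hq0]; simp [L]
  | mul_left z hz y hy ih =>
    rw [map_mul, L_mul]
    rcases hz with rfl | rfl
    · calc (C p q (pi p q (tkA p q) * pi p q y) : ℤ)
          ≤ (q : ℤ) + C p q (pi p q y) := by
            rw [pi_a]
            exact_mod_cast Nat.cast_le.mpr (C_gen_mul_le hp0 hq0 (by omega) (by omega) true _)
        _ ≤ L p q (tkA p q) + L p q y := by rw [L_a]; omega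
    · calc (C p q (pi p q (tkB p q) * pi p q y) : ℤ)
          ≤ (p : ℤ) + C p q (pi p q y) := by
            rw [pi_b]
            exact_mod_cast Nat.cast_le.mpr (C_gen_mul_le hp0 hq0 (by omega) (by omega) false _)
        _ ≤ L p q (tkB p q) + L p q y := by rw [L_b]; omega

section Inv
open Monoid.CoprodI

/-- The inverse word: reverse and invert all letters. -/
def winv (w : Word (M p q)) : Word (M p q) where
  toList := (w.toList.map (fun l => ⟨l.1, l.2⁻¹⟩)).reverse
  ne_one := by
    intro l hl
    rw [List.mem_reverse, List.mem_map] at hl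
    obtain ⟨l', hl', rfl⟩ := hl
    exact inv_ne_one.mpr (w.ne_one l' hl')
  chain_ne := by
    rw [List.isChain_reverse]
    refine List.isChain_map_of_isChain _ ?_ w.chain_ne
    intro a b h
    exact fun hh => h hh.symm

lemma prod_winv (w : Word (M p q)) : Word.prod (winv w) = (Word.prod w)⁻¹ := by
  rw [Word.prod, Word.prod, winv, List.prod_inv_reverse, List.map_reverse, List.map_map,
    List.map_map]
  simp [Function.comp_def]


lemma equiv_inv (g : G p q) : Word.equiv g⁻¹ = winv (Word.equiv g) := by
  apply Word.equiv.apply_eq_iff_eq_symm_apply.mpr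
  rw [equiv_symm_eq, prod_winv, prod_equiv]

lemma wgt_add_wgt_inv (hp0 : p ≠ 0) (hq0 : q ≠ 0) (l : Σ i, M p q i) (hl : l.2 ≠ 1) :
    wgt p q l + wgt p q ⟨l.1, l.2⁻¹⟩ = p * q := by
  haveI : NeZero p := ⟨hp0⟩
  haveI : NeZero q := ⟨hq0⟩
  obtain ⟨i, m⟩ := l
  have key : ∀ (n c : ℕ) [NeZero n] (x : ZMod n), x ≠ 0 →
      x.val * c + (-x).val * c = n * c := by
    intro n c _ x hx
    rw [ZMod.neg_val, if_neg hx, ← add_mul]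
    congr 1
    have := ZMod.val_lt x
    omega
  have hm : Multiplicative.toAdd m ≠ 0 := hl
  cases i
  · have := key q p _ hm
    simpa [wgt, mul_comm] using this
  · have := key p q _ hm
    simpa [wgt, mul_comm] using this

lemma C_add_C_inv (hp0 : p ≠ 0) (hq0 : q ≠ 0) (g : G p q) :
    C p q g + C p q g⁻¹ = (Word.equiv g).toList.length * (p * q) := by
  rw [C, C, equiv_inv]
  have haux : ∀ (Lst : List (Σ i, M p q i)), (∀ l ∈ Lst, l.2 ≠ 1) →
      (Lst.map (wgt p q)).sum + ((Lst.map (fun l => (⟨l.1, l.2⁻¹⟩ : Σ i, M p q i))).map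
        (wgt p q)).sum = Lst.length * (p * q) := by
    intro Lst
    induction Lst with
    | nil => simp
    | cons hd tl ih =>
      intro hne
      simp only [List.map_cons, List.sum_cons, List.length_cons]
      have h1 := wgt_add_wgt_inv hp0 hq0 hd (hne hd (List.mem_cons_self))
      have h2 := ih (fun l hl => hne l (List.mem_cons_of_mem _ hl))
      rw [add_mul, one_mul, ← h2, ← h1]
      ring
  have := haux (Word.equiv g).toList (Word.equiv g).ne_one
  rw [Cw, Cw, winv, List.map_reverse, List.sum_reverse]
  exact this

end Inv


/-- Homomorphism from `Multiplicative (ZMod n)` determined by an element of order dividing n. -/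
def zmodHom {n : ℕ} [NeZero n] {Q : Type*} [Group Q] (t : Q) (ht : t ^ n = 1) :
    Multiplicative (ZMod n) →* Q where
  toFun m := t ^ (Multiplicative.toAdd m).val
  map_one' := by simp
  map_mul' x y := by
    have key : ∀ a b : ZMod n, t ^ ((a + b).val) = t ^ (a.val + b.val) := by
      intro a b
      conv_rhs => rw [← Nat.mod_add_div (a.val + b.val) n]
      rw [pow_add, pow_mul, ht, one_pow, mul_one, ZMod.val_add]
    show t ^ (Multiplicative.toAdd (x * y)).val = _
    rw [toAdd_mul, key, pow_add]

lemma zmodHom_apply {n : ℕ} [NeZero n] {Q : Type*} [Group Q] (t : Q) (ht : t ^ n = 1)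
    (m : ZMod n) : zmodHom t ht (Multiplicative.ofAdd m) = t ^ m.val := rfl

instance zpowersDeltaNormal : (Subgroup.zpowers (tkA p q ^ p)).Normal := by
  constructor
  intro n hn g
  obtain ⟨k, rfl⟩ := hn
  have hc : Commute (tkA p q ^ p) g := delta_central g
  rw [((hc.zpow_left k).symm).eq, mul_assoc, mul_inv_cancel, mul_one]
  exact Subgroup.zpow_mem _ (Subgroup.mem_zpowers _) k

lemma ker_pi (hp : 2 ≤ p) (hpq : p < q) {x : TorusKnotGroup p q} (hx : pi p q x = 1) :
    ∃ m : ℤ, x = (tkA p q ^ p) ^ m := by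
  haveI : NeZero p := ⟨by omega⟩
  haveI : NeZero q := ⟨by omega⟩
  haveI : Fact (1 < p) := ⟨by omega⟩
  haveI : Fact (1 < q) := ⟨by omega⟩
  haveI : ∀ i : Bool, NeZero (cond i p q) := fun i => by
    cases i
    · exact ⟨show q ≠ 0 by omega⟩
    · exact ⟨show p ≠ 0 by omega⟩
  haveI : ∀ i : Bool, Fact (1 < cond i p q) := fun i => by
    cases i
    · exact ⟨show 1 < q by omega⟩
    · exact ⟨show 1 < p by omega⟩
  set N := Subgroup.zpowers (tkA p q ^ p) with hN
  set mkq := QuotientGroup.mk' N with hmkq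
  have hta : (mkq (tkA p q)) ^ p = 1 := by
    rw [← map_pow]
    exact (QuotientGroup.eq_one_iff _).mpr (Subgroup.mem_zpowers _)
  have htb : (mkq (tkB p q)) ^ q = 1 := by
    rw [← map_pow, ← rel_ab]
    exact (QuotientGroup.eq_one_iff _).mpr (Subgroup.mem_zpowers _)
  let fam : ∀ i : Bool, M p q i →* TorusKnotGroup p q ⧸ N := fun i =>
    Bool.rec (zmodHom (mkq (tkB p q)) htb) (zmodHom (mkq (tkA p q)) hta) i
  let rho : G p q →* TorusKnotGroup p q ⧸ N := Monoid.CoprodI.lift fam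
  have hcomp : rho.comp (pi p q) = mkq := by
    apply PresentedGroup.ext
    intro i
    cases i
    · show rho (pi p q (tkB p q)) = mkq (tkB p q)
      rw [pi_b]
      show rho (Monoid.CoprodI.of (Multiplicative.ofAdd (1 : ZMod (cond false p q)))) = _
      rw [Monoid.CoprodI.lift_of]
      show zmodHom (mkq (tkB p q)) htb (Multiplicative.ofAdd 1) = _
      rw [zmodHom_apply, ZMod.val_one, pow_one]
    · show rho (pi p q (tkA p q)) = mkq (tkA p q)
      rw [pi_a]
      show rho (Monoid.CoprodI.of (Multiplicative.ofAdd (1 : ZMod (cond true p q)))) = _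
      rw [Monoid.CoprodI.lift_of]
      show zmodHom (mkq (tkA p q)) hta (Multiplicative.ofAdd 1) = _
      rw [zmodHom_apply, ZMod.val_one, pow_one]
  have hone : mkq x = 1 := by
    rw [← hcomp]
    show rho (pi p q x) = 1
    rw [hx, map_one]
  obtain ⟨m, hm⟩ := (QuotientGroup.eq_one_iff x).mp hone
  exact ⟨m, hm.symm⟩


lemma gen_pow (i : Bool) (k : ℕ) :
    gen p q i ^ k =
      Monoid.CoprodI.of (M := M p q) (i := i) (Multiplicative.ofAdd ((k : ZMod (cond i p q)))) := by
  rw [gen, ← map_pow, ← ofAdd_nsmul, nsmul_eq_mul, mul_one]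

lemma L_zpow (x : TorusKnotGroup p q) (m : ℤ) : L p q (x ^ m) = m * L p q x := by
  show Multiplicative.toAdd (ell p q (x ^ m)) = m * Multiplicative.toAdd (ell p q x)
  rw [map_zpow, toAdd_zpow, smul_eq_mul]

lemma L_delta_zpow (m : ℤ) : L p q ((tkA p q ^ p) ^ m) = m * ((p : ℤ) * q) := by
  rw [L_zpow, L_pow, L_a]

end TKAux

/-- In T(p,q) with 2 ≤ p < q, the element Δ = aᵖ (= bᑫ) is central, its set
    of left divisors in the monoid T⁺(p,q) is
    {1, a, …, a^{p−1}, b, …, b^{q−1}, Δ}, and this set equals the set of its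
    right divisors (Δ is balanced). -/
theorem stmt_18 (p q : ℕ) (hp : 2 ≤ p) (hpq : p < q) :
    (∀ g : TorusKnotGroup p q, tkA p q ^ p * g = g * tkA p q ^ p) ∧
    ({x : TorusKnotGroup p q |
        x ∈ tkPos p q ∧ ∃ y ∈ tkPos p q, tkA p q ^ p = x * y} =
      {x : TorusKnotGroup p q |
        (∃ k < p, x = tkA p q ^ k) ∨ (∃ k < q, x = tkB p q ^ k) ∨
          x = tkA p q ^ p}) ∧
    ({x : TorusKnotGroup p q |
        x ∈ tkPos p q ∧ ∃ y ∈ tkPos p q, tkA p q ^ p = x * y} =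
      {x : TorusKnotGroup p q |
        x ∈ tkPos p q ∧ ∃ y ∈ tkPos p q, tkA p q ^ p = y * x}) := by
  have hp0 : p ≠ 0 := by omega
  have hq0 : q ≠ 0 := by omega
  haveI : NeZero p := ⟨hp0⟩
  haveI : NeZero q := ⟨hq0⟩
  haveI : ∀ i : Bool, NeZero (cond i p q) := fun i => by
    cases i
    · exact ⟨show q ≠ 0 by omega⟩
    · exact ⟨show p ≠ 0 by omega⟩
  have ha_mem : tkA p q ∈ tkPos p q := Submonoid.subset_closure (Set.mem_insert _ _)
  have hb_mem : tkB p q ∈ tkPos p q := Submonoid.subset_closure (Set.mem_insert_of_mem _ rfl)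
  refine ⟨fun g => TKAux.delta_central g, ?_, ?_⟩
  · -- the divisor set computation
    ext x
    simp only [Set.mem_setOf_eq]
    constructor
    · rintro ⟨hx, y, hy, hxy⟩
      have hLx := TKAux.L_nonneg hx
      have hLy := TKAux.L_nonneg hy
      have hLsum : TKAux.L p q x + TKAux.L p q y = (p : ℤ) * q := by
        rw [← TKAux.L_mul, ← hxy, TKAux.L_pow, TKAux.L_a]
      have hpi : TKAux.pi p q x * TKAux.pi p q y = 1 := by
        rw [← map_mul, ← hxy, map_pow, TKAux.pi_a]
        exact TKAux.gen_pow_eq_one p q true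
      have hpiy : TKAux.pi p q y = (TKAux.pi p q x)⁻¹ :=
        (inv_eq_of_mul_eq_one_right hpi).symm
      have hCx := TKAux.pos_C_le hp hpq hx
      have hCy := TKAux.pos_C_le hp hpq hy
      have hsum := TKAux.C_add_C_inv hp0 hq0 (TKAux.pi p q x)
      set r := (Monoid.CoprodI.Word.equiv (TKAux.pi p q x)).toList.length with hr
      have hrle : r ≤ 1 := by
        have h1 : (↑(r * (p * q)) : ℤ) ≤ (p : ℤ) * q := by
          rw [← hsum]
          push_cast
          rw [hpiy] at hCy
          omega
        have h2 : r * (p * q) ≤ 1 * (p * q) := by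
          rw [one_mul]
          exact_mod_cast h1
        exact Nat.le_of_mul_le_mul_right h2 (by positivity)
      rcases Nat.le_one_iff_eq_zero_or_eq_one.mp hrle with h0 | h1
      · -- pi x = 1, so x is a power of Δ
        have hw : Monoid.CoprodI.Word.equiv (TKAux.pi p q x) = Monoid.CoprodI.Word.empty := by
          apply Monoid.CoprodI.Word.ext
          rw [List.length_eq_zero_iff] at h0
          exact h0
        have hpix : TKAux.pi p q x = 1 := by
          have h := TKAux.prod_equiv (TKAux.pi p q x)
          rw [hw, Monoid.CoprodI.Word.prod_empty] at h
          exact h.symm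
        obtain ⟨m, rfl⟩ := TKAux.ker_pi hp hpq hpix
        rw [TKAux.L_delta_zpow] at hLx hLsum
        have hpqpos : (0 : ℤ) < (p : ℤ) * q := by positivity
        have hm : m = 0 ∨ m = 1 := by
          rcases lt_trichotomy m 0 with h | h | h
          · exfalso
            have h1 : m * ((p : ℤ) * q) ≤ -1 * ((p : ℤ) * q) :=
              mul_le_mul_of_nonneg_right (by omega) (by positivity)
            linarith
          · exact Or.inl h
          · rcases lt_or_ge m 2 with h2 | h2
            · right; omega
            · exfalso
              have h1 : 2 * ((p : ℤ) * q) ≤ m * ((p : ℤ) * q) :=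
                mul_le_mul_of_nonneg_right (by omega) (by positivity)
              linarith
        rcases hm with rfl | rfl
        · exact Or.inl ⟨0, by omega, by simp⟩
        · exact Or.inr (Or.inr (by rw [zpow_one]))
      · -- pi x = of m for a single letter
        obtain ⟨l, hl⟩ := List.length_eq_one_iff.mp h1
        have hne := (Monoid.CoprodI.Word.equiv (TKAux.pi p q x)).ne_one l
          (by rw [hl]; exact List.mem_singleton_self l)
        have hprod : TKAux.pi p q x = Monoid.CoprodI.of l.2 := by
          have h := TKAux.prod_equiv (TKAux.pi p q x)
          rw [Monoid.CoprodI.Word.prod, hl] at h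
          simpa using h.symm
        obtain ⟨i, m⟩ := l
        have hLxle : TKAux.L p q x ≤ (p : ℤ) * q := by omega
        cases i
        · -- b-letter
          set k := (Multiplicative.toAdd m).val with hk
          have hklt : k < q := ZMod.val_lt _
          have hk0 : k ≠ 0 := by
            intro h
            exact hne ((ZMod.val_eq_zero _).mp h : Multiplicative.toAdd m = 0)
          have hpib : TKAux.pi p q (tkB p q ^ k) = Monoid.CoprodI.of m := by
            rw [map_pow, TKAux.pi_b, TKAux.gen_pow]
            congr 1
            have hcast : ((k : ℕ) : ZMod (cond false p q)) = Multiplicative.toAdd m :=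
              ZMod.natCast_rightInverse _
            rw [hcast, ofAdd_toAdd]
          have hker : TKAux.pi p q (x * (tkB p q ^ k)⁻¹) = 1 := by
            rw [map_mul, map_inv, hprod, hpib, mul_inv_cancel]
          obtain ⟨mm, hmm⟩ := TKAux.ker_pi hp hpq hker
          have hxeq : x = (tkA p q ^ p) ^ mm * tkB p q ^ k := by
            rw [← hmm]
            group
          have hLxval : TKAux.L p q x = mm * ((p : ℤ) * q) + k * p := by
            rw [hxeq, TKAux.L_mul, TKAux.L_delta_zpow, TKAux.L_pow, TKAux.L_b]
          have hk1 : 1 ≤ (k : ℤ) := by exact_mod_cast Nat.one_le_iff_ne_zero.mpr hk0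
          have hkq : (k : ℤ) ≤ (q : ℤ) - 1 := by
            have : (k : ℤ) < (q : ℤ) := by exact_mod_cast hklt
            omega
          have hp2 : (2 : ℤ) ≤ (p : ℤ) := by exact_mod_cast hp
          have hqp : (p : ℤ) < (q : ℤ) := by exact_mod_cast hpq
          have hmm0 : mm = 0 := by
            rcases lt_trichotomy mm 0 with h | h | h
            · exfalso
              have h1 : mm * ((p : ℤ) * q) ≤ -1 * ((p : ℤ) * q) :=
                mul_le_mul_of_nonneg_right (by omega) (by positivity)
              have h2 : (k : ℤ) * p ≤ ((q : ℤ) - 1) * p :=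
                mul_le_mul_of_nonneg_right hkq (by positivity)
              linarith
            · exact h
            · exfalso
              have h1 : 1 * ((p : ℤ) * q) ≤ mm * ((p : ℤ) * q) :=
                mul_le_mul_of_nonneg_right (by omega) (by positivity)
              have h2 : 1 * (p : ℤ) ≤ (k : ℤ) * p :=
                mul_le_mul_of_nonneg_right hk1 (by positivity)
              linarith
          refine Or.inr (Or.inl ⟨k, hklt, ?_⟩)
          rw [hxeq, hmm0, zpow_zero, one_mul]
        · -- a-letter
          set k := (Multiplicative.toAdd m).val with hk
          have hklt : k < p := ZMod.val_lt _
          have hk0 : k ≠ 0 := by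
            intro h
            exact hne ((ZMod.val_eq_zero _).mp h : Multiplicative.toAdd m = 0)
          have hpia : TKAux.pi p q (tkA p q ^ k) = Monoid.CoprodI.of m := by
            rw [map_pow, TKAux.pi_a, TKAux.gen_pow]
            congr 1
            have hcast : ((k : ℕ) : ZMod (cond true p q)) = Multiplicative.toAdd m :=
              ZMod.natCast_rightInverse _
            rw [hcast, ofAdd_toAdd]
          have hker : TKAux.pi p q (x * (tkA p q ^ k)⁻¹) = 1 := by
            rw [map_mul, map_inv, hprod, hpia, mul_inv_cancel]
          obtain ⟨mm, hmm⟩ := TKAux.ker_pi hp hpq hker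
          have hxeq : x = (tkA p q ^ p) ^ mm * tkA p q ^ k := by
            rw [← hmm]
            group
          have hLxval : TKAux.L p q x = mm * ((p : ℤ) * q) + k * q := by
            rw [hxeq, TKAux.L_mul, TKAux.L_delta_zpow, TKAux.L_pow, TKAux.L_a]
          have hk1 : 1 ≤ (k : ℤ) := by exact_mod_cast Nat.one_le_iff_ne_zero.mpr hk0
          have hkp : (k : ℤ) ≤ (p : ℤ) - 1 := by
            have : (k : ℤ) < (p : ℤ) := by exact_mod_cast hklt
            omega
          have hp2 : (2 : ℤ) ≤ (p : ℤ) := by exact_mod_cast hp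
          have hq2 : (2 : ℤ) ≤ (q : ℤ) := by exact_mod_cast (by omega : 2 ≤ q)
          have hmm0 : mm = 0 := by
            rcases lt_trichotomy mm 0 with h | h | h
            · exfalso
              have h1 : mm * ((p : ℤ) * q) ≤ -1 * ((p : ℤ) * q) :=
                mul_le_mul_of_nonneg_right (by omega) (by positivity)
              have h2 : (k : ℤ) * q ≤ ((p : ℤ) - 1) * q :=
                mul_le_mul_of_nonneg_right hkp (by positivity)
              linarith
            · exact h
            · exfalso
              have h1 : 1 * ((p : ℤ) * q) ≤ mm * ((p : ℤ) * q) :=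
                mul_le_mul_of_nonneg_right (by omega) (by positivity)
              have h2 : 1 * (q : ℤ) ≤ (k : ℤ) * q :=
                mul_le_mul_of_nonneg_right hk1 (by positivity)
              linarith
          refine Or.inl ⟨k, hklt, ?_⟩
          rw [hxeq, hmm0, zpow_zero, one_mul]
    · rintro (⟨k, hk, rfl⟩ | ⟨k, hk, rfl⟩ | rfl)
      · exact ⟨pow_mem ha_mem k, tkA p q ^ (p - k), pow_mem ha_mem _, by
          rw [← pow_add]; congr 1; omega⟩
      · exact ⟨pow_mem hb_mem k, tkB p q ^ (q - k), pow_mem hb_mem _, by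
          rw [TKAux.rel_ab, ← pow_add]; congr 1; omega⟩
      · exact ⟨pow_mem ha_mem p, 1, one_mem _, (mul_one _).symm⟩
  · -- left divisors = right divisors
    ext x
    simp only [Set.mem_setOf_eq]
    constructor
    · rintro ⟨hx, y, hy, hxy⟩
      refine ⟨hx, y, hy, ?_⟩
      have h1 : y * (x * y) * y⁻¹ = y * x := by group
      have h2 : y * tkA p q ^ p * y⁻¹ = tkA p q ^ p := by
        rw [← TKAux.delta_central y]
        group
      calc tkA p q ^ p = y * tkA p q ^ p * y⁻¹ := h2.symm
        _ = y * (x * y) * y⁻¹ := by rw [← hxy]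
        _ = y * x := h1
    · rintro ⟨hx, y, hy, hxy⟩
      refine ⟨hx, y, hy, ?_⟩
      have h2 : x * tkA p q ^ p * x⁻¹ = tkA p q ^ p := by
        rw [← TKAux.delta_central x]
        group
      calc tkA p q ^ p = x * tkA p q ^ p * x⁻¹ := h2.symm
        _ = x * (y * x) * x⁻¹ := by rw [hxy]
        _ = x * y := by group
end
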